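/- arXiv:1809.10405 — 3 statements merged into one kernel-verified Lean document; each statement's English description precedes it below -/
import Mathlib

section
/- Let T be an integer with |T| > 11, let ϑ be a root of the irreducible polynomial x⁸ + (4T⁴ + 2)x⁴ + 1, set K = Q(ϑ), and let O = Z[i][ϑ] be the order of K generated by ϑ over the Gaussian integers Z[i]. Then O admits no power integral basis: there is no element α ∈ O with Z[α] = O. -/
open Polynomial


lemma indep_pows (T : ℤ)
    (hirr : Irreducible (X ^ 8 + C (((4 * T ^ 4 + 2 : ℤ) : ℚ)) * X ^ 4 + 1 : ℚ[X]))
    (ϑ : ℂ) (hϑ : ϑ ^ 8 + (4 * (T : ℂ) ^ 4 + 2) * ϑ ^ 4 + 1 = 0)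
    (q0 q1 q2 q3 q4 q5 q6 q7 : ℚ)
    (h : (q0 : ℂ) + q1 * ϑ + q2 * ϑ ^ 2 + q3 * ϑ ^ 3 + q4 * ϑ ^ 4 + q5 * ϑ ^ 5
      + q6 * ϑ ^ 6 + q7 * ϑ ^ 7 = 0) :
    q0 = 0 ∧ q1 = 0 ∧ q2 = 0 ∧ q3 = 0 ∧ q4 = 0 ∧ q5 = 0 ∧ q6 = 0 ∧ q7 = 0 := by
  set f : ℚ[X] := X ^ 8 + C (((4 * T ^ 4 + 2 : ℤ) : ℚ)) * X ^ 4 + 1 with hf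
  have hfm : f.Monic := by
    have : f = X ^ (7 + 1) + (C (((4 * T ^ 4 + 2 : ℤ) : ℚ)) * X ^ 4 + 1) := by ring
    rw [this]
    apply monic_X_pow_add
    have h7 : (C (((4 * T ^ 4 + 2 : ℤ) : ℚ)) * X ^ 4 + 1 : ℚ[X]).degree ≤ 7 := by
      compute_degree!
    exact lt_of_le_of_lt h7 (by norm_num)
  have hfϑ : aeval ϑ f = 0 := by
    rw [hf]
    simp only [map_add, map_mul, map_pow, aeval_X, aeval_C, aeval_one, map_one]
    have hc : (((4 * T ^ 4 + 2 : ℤ) : ℚ) : ℂ) = 4 * (T : ℂ) ^ 4 + 2 := by push_cast; ring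
    rw [eq_ratCast, hc]
    linear_combination hϑ
  have hmin : minpoly ℚ ϑ = f := (minpoly.eq_of_irreducible_of_monic hirr hfϑ hfm).symm
  have hdegf : f.degree = 8 := by
    rw [hf]
    compute_degree!
  set p : ℚ[X] := C q0 + C q1 * X + C q2 * X ^ 2 + C q3 * X ^ 3 + C q4 * X ^ 4
      + C q5 * X ^ 5 + C q6 * X ^ 6 + C q7 * X ^ 7 with hp
  have hpϑ : aeval ϑ p = 0 := by
    rw [hp]
    simp only [map_add, map_mul, map_pow, aeval_X, aeval_C]
    exact h
  by_cases hp0 : p = 0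
  · have hc : ∀ k, p.coeff k = 0 := by intro k; rw [hp0]; simp
    refine ⟨?_, ?_, ?_, ?_, ?_, ?_, ?_, ?_⟩
    · have := hc 0; rw [hp] at this; simpa using this
    · have := hc 1; rw [hp] at this; simpa using this
    · have := hc 2; rw [hp] at this; simpa using this
    · have := hc 3; rw [hp] at this; simpa using this
    · have := hc 4; rw [hp] at this; simpa using this
    · have := hc 5; rw [hp] at this; simpa using this
    · have := hc 6; rw [hp] at this; simpa using this
    · have := hc 7; rw [hp] at this; simpa using this
  · exfalso
    have h1 : (minpoly ℚ ϑ).degree ≤ p.degree := minpoly.degree_le_of_ne_zero ℚ ϑ hp0 hpϑ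
    have h2 : p.degree ≤ 7 := by rw [hp]; compute_degree
    rw [hmin, hdegf] at h1
    have : (8 : WithBot ℕ) ≤ 7 := le_trans h1 h2
    norm_num at this

lemma indepB (T s : ℤ) (hT : T ≠ 0) (hs : s = 1 ∨ s = -1)
    (hirr : Irreducible (X ^ 8 + C (((4 * T ^ 4 + 2 : ℤ) : ℚ)) * X ^ 4 + 1 : ℚ[X]))
    (ϑ : ℂ) (hϑ : ϑ ^ 8 + (4 * (T : ℂ) ^ 4 + 2) * ϑ ^ 4 + 1 = 0)
    (hrel : ϑ ^ 4 = -1 - 2 * (s : ℂ) * (T : ℂ) ^ 2 * Complex.I * ϑ ^ 2)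
    (u0 u1 u2 u3 u4 u5 u6 u7 : ℤ)
    (h : (u0 : ℂ) + u1 * Complex.I + u2 * ϑ + u3 * Complex.I * ϑ + u4 * ϑ ^ 2
      + u5 * Complex.I * ϑ ^ 2 + u6 * ϑ ^ 3 + u7 * Complex.I * ϑ ^ 3 = 0) :
    u0 = 0 ∧ u1 = 0 ∧ u2 = 0 ∧ u3 = 0 ∧ u4 = 0 ∧ u5 = 0 ∧ u6 = 0 ∧ u7 = 0 := by
  have hTC : (T : ℂ) ≠ 0 := Int.cast_ne_zero.2 hT
  have hs2 : (s : ℂ) ^ 2 = 1 := by rcases hs with h' | h' <;> norm_num [h']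
  have hsQ2 : (s : ℚ) ^ 2 = 1 := by rcases hs with h' | h' <;> norm_num [h']
  have hTQ : (T : ℚ) ≠ 0 := Int.cast_ne_zero.2 hT
  set w : ℚ := -(s : ℚ) / (2 * (T : ℚ) ^ 2) with hw
  have hwne : w ≠ 0 := by
    rw [hw]
    apply div_ne_zero
    · simp only [neg_ne_zero, Int.cast_ne_zero]
      rcases hs with h' | h' <;> simp [h']
    · positivity
  -- I * ϑ^2 = w * (1 + ϑ^4)
  have hIθ2 : Complex.I * ϑ ^ 2 = (w : ℂ) * (1 + ϑ ^ 4) := by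
    have h2T : (2 * (T : ℂ) ^ 2) ≠ 0 := mul_ne_zero two_ne_zero (pow_ne_zero 2 hTC)
    rw [hw]
    push_cast
    rw [div_mul_eq_mul_div, eq_div_iff h2T]
    linear_combination (s : ℂ) * hrel - 2 * (T : ℂ) ^ 2 * Complex.I * ϑ ^ 2 * hs2
  have key : ((w * u1 : ℚ) : ℂ) + (w * u3 : ℚ) * ϑ + ((u0 : ℚ) + w * u5 : ℚ) * ϑ ^ 2
      + ((u2 : ℚ) + w * u7 : ℚ) * ϑ ^ 3 + ((u4 : ℚ) + w * u1 : ℚ) * ϑ ^ 4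
      + ((u6 : ℚ) + w * u3 : ℚ) * ϑ ^ 5 + ((w * u5 : ℚ)) * ϑ ^ 6 + ((w * u7 : ℚ)) * ϑ ^ 7 = 0 := by
    push_cast
    linear_combination (ϑ ^ 2) * h - ((u1 : ℂ) + u3 * ϑ + u5 * ϑ ^ 2 + u7 * ϑ ^ 3) * hIθ2
  obtain ⟨e0, e1, e2, e3, e4, e5, e6, e7⟩ :=
    indep_pows T hirr ϑ hϑ _ _ _ _ _ _ _ _ key
  have hu1 : u1 = 0 := by
    have : (u1 : ℚ) = 0 := by
      have := mul_eq_zero.1 e0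
      tauto
    exact_mod_cast this
  have hu3 : u3 = 0 := by
    have : (u3 : ℚ) = 0 := by have := mul_eq_zero.1 e1; tauto
    exact_mod_cast this
  have hu5 : u5 = 0 := by
    have : (u5 : ℚ) = 0 := by have := mul_eq_zero.1 e6; tauto
    exact_mod_cast this
  have hu7 : u7 = 0 := by
    have : (u7 : ℚ) = 0 := by have := mul_eq_zero.1 e7; tauto
    exact_mod_cast this
  have hu0 : u0 = 0 := by
    have : (u0 : ℚ) = 0 := by rw [hu5] at e2; simpa using e2
    exact_mod_cast this
  have hu2 : u2 = 0 := by
    have : (u2 : ℚ) = 0 := by rw [hu7] at e3; simpa using e3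
    exact_mod_cast this
  have hu4 : u4 = 0 := by
    have : (u4 : ℚ) = 0 := by rw [hu1] at e4; simpa using e4
    exact_mod_cast this
  have hu6 : u6 = 0 := by
    have : (u6 : ℚ) = 0 := by rw [hu3] at e5; simpa using e5
    exact_mod_cast this
  exact ⟨hu0, hu1, hu2, hu3, hu4, hu5, hu6, hu7⟩


/-- membership in the ℤ-span of `1, I, ϑ, Iϑ, ϑ², Iϑ², ϑ³, Iϑ³`. -/
def inL (ϑ x : ℂ) : Prop :=
  ∃ a b c d e f g h : ℤ, x = a + b * Complex.I + c * ϑ + d * Complex.I * ϑ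
    + e * ϑ ^ 2 + f * Complex.I * ϑ ^ 2 + g * ϑ ^ 3 + h * Complex.I * ϑ ^ 3

namespace inL

variable {ϑ x y : ℂ}

lemma zero : inL ϑ 0 := ⟨0,0,0,0,0,0,0,0, by push_cast; ring⟩

lemma one : inL ϑ 1 := ⟨1,0,0,0,0,0,0,0, by push_cast; ring⟩

lemma I : inL ϑ Complex.I := ⟨0,1,0,0,0,0,0,0, by push_cast; ring⟩

lemma theta : inL ϑ ϑ := ⟨0,0,1,0,0,0,0,0, by push_cast; ring⟩

lemma add (hx : inL ϑ x) (hy : inL ϑ y) : inL ϑ (x + y) := by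
  obtain ⟨a,b,c,d,e,f,g,h, rfl⟩ := hx
  obtain ⟨a',b',c',d',e',f',g',h', rfl⟩ := hy
  exact ⟨a+a', b+b', c+c', d+d', e+e', f+f', g+g', h+h', by push_cast; ring⟩

lemma neg (hx : inL ϑ x) : inL ϑ (-x) := by
  obtain ⟨a,b,c,d,e,f,g,h, rfl⟩ := hx
  exact ⟨-a,-b,-c,-d,-e,-f,-g,-h, by push_cast; ring⟩

lemma intMul (n : ℤ) (hx : inL ϑ x) : inL ϑ ((n : ℂ) * x) := by
  obtain ⟨a,b,c,d,e,f,g,h, rfl⟩ := hx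
  exact ⟨n*a, n*b, n*c, n*d, n*e, n*f, n*g, n*h, by push_cast; ring⟩

lemma mulI (hx : inL ϑ x) : inL ϑ (x * Complex.I) := by
  obtain ⟨a,b,c,d,e,f,g,h, rfl⟩ := hx
  refine ⟨-b, a, -d, c, -f, e, -h, g, ?_⟩
  push_cast
  linear_combination ((b:ℂ) + d*ϑ + f*ϑ^2 + h*ϑ^3) * Complex.I_sq

lemma mulTheta {T s : ℤ}
    (hrel : ϑ ^ 4 = -1 - 2 * (s : ℂ) * (T : ℂ) ^ 2 * Complex.I * ϑ ^ 2)
    (hx : inL ϑ x) : inL ϑ (x * ϑ) := by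
  obtain ⟨a,b,c,d,e,f,g,h, rfl⟩ := hx
  refine ⟨-g, -h, a, b, c + 2*s*T^2*h, d - 2*s*T^2*g, e, f, ?_⟩
  push_cast
  linear_combination ((g:ℂ) + h*Complex.I) * hrel
    + (-2*(s:ℂ)*(T:ℂ)^2*h*ϑ^2) * Complex.I_sq

lemma mul {T s : ℤ}
    (hrel : ϑ ^ 4 = -1 - 2 * (s : ℂ) * (T : ℂ) ^ 2 * Complex.I * ϑ ^ 2)
    (hx : inL ϑ x) (hy : inL ϑ y) : inL ϑ (x * y) := by
  obtain ⟨a,b,c,d,e,f,g,h, rfl⟩ := hy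
  have h1 : inL ϑ (x * Complex.I) := hx.mulI
  have h2 : inL ϑ (x * ϑ) := hx.mulTheta hrel
  have h3 : inL ϑ (x * Complex.I * ϑ) := h1.mulTheta hrel
  have h4 : inL ϑ (x * ϑ * ϑ) := h2.mulTheta hrel
  have h5 : inL ϑ (x * Complex.I * ϑ * ϑ) := h3.mulTheta hrel
  have h6 : inL ϑ (x * ϑ * ϑ * ϑ) := h4.mulTheta hrel
  have h7 : inL ϑ (x * Complex.I * ϑ * ϑ * ϑ) := h5.mulTheta hrel
  have : x * (a + b * Complex.I + c * ϑ + d * Complex.I * ϑ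
      + e * ϑ ^ 2 + f * Complex.I * ϑ ^ 2 + g * ϑ ^ 3 + h * Complex.I * ϑ ^ 3)
      = (a:ℂ) * x + (b:ℂ) * (x * Complex.I) + (c:ℂ) * (x * ϑ)
      + (d:ℂ) * (x * Complex.I * ϑ) + (e:ℂ) * (x * ϑ * ϑ)
      + (f:ℂ) * (x * Complex.I * ϑ * ϑ) + (g:ℂ) * (x * ϑ * ϑ * ϑ)
      + (h:ℂ) * (x * Complex.I * ϑ * ϑ * ϑ) := by ring
  rw [this]
  have t1 := (intMul a hx).add (intMul b h1)
  have t2 := t1.add (intMul c h2)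
  have t3 := t2.add (intMul d h3)
  have t4 := t3.add (intMul e h4)
  have t5 := t4.add (intMul f h5)
  have t6 := t5.add (intMul g h6)
  exact t6.add (intMul h h7)

end inL


theorem main_aux (T s : ℤ) (hT0 : T ≠ 0) (hs : s = 1 ∨ s = -1)
    (hirr : Irreducible (X ^ 8 + C (((4 * T ^ 4 + 2 : ℤ) : ℚ)) * X ^ 4 + 1 : ℚ[X]))
    (ϑ : ℂ) (hϑ : ϑ ^ 8 + (4 * (T : ℂ) ^ 4 + 2) * ϑ ^ 4 + 1 = 0)
    (hrel : ϑ ^ 4 = -1 - 2 * (s : ℂ) * (T : ℂ) ^ 2 * Complex.I * ϑ ^ 2)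
    (α : ℂ) (hαR : α ∈ Subring.closure {Complex.I, ϑ})
    (hgen : Subring.closure {α} = Subring.closure {Complex.I, ϑ}) : False := by
  have hIR : Complex.I ∈ Subring.closure ({Complex.I, ϑ} : Set ℂ) :=
    Subring.subset_closure (by simp)
  have hθR : ϑ ∈ Subring.closure ({Complex.I, ϑ} : Set ℂ) :=
    Subring.subset_closure (by simp)
  -- every element of the order has integer coordinates w.r.t. the 8 monomials
  have hL : ∀ x ∈ Subring.closure ({Complex.I, ϑ} : Set ℂ), inL ϑ x := by
    intro x hx
    induction hx using Subring.closure_induction with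
    | mem z hz =>
      simp only [Set.mem_insert_iff, Set.mem_singleton_iff] at hz
      rcases hz with rfl | rfl
      · exact inL.I
      · exact inL.theta
    | zero => exact inL.zero
    | one => exact inL.one
    | add x y hx hy ihx ihy => exact ihx.add ihy
    | neg x hx ihx => exact ihx.neg
    | mul x y hx hy ihx ihy => exact ihx.mul hrel ihy
  -- fourth powers are congruent to integers mod 2
  have hpow4 : ∀ x ∈ Subring.closure ({Complex.I, ϑ} : Set ℂ),
      ∃ n : ℤ, ∃ β, β ∈ Subring.closure ({Complex.I, ϑ} : Set ℂ) ∧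
        x ^ 4 = (n : ℂ) + 2 * β := by
    intro x hx
    induction hx using Subring.closure_induction with
    | mem z hz =>
      simp only [Set.mem_insert_iff, Set.mem_singleton_iff] at hz
      rcases hz with rfl | hzz
      · refine ⟨1, 0, zero_mem _, ?_⟩
        push_cast
        linear_combination
      · rw [hzz]
        refine ⟨-1, -((s : ℂ) * (T : ℂ) ^ 2 * Complex.I * ϑ ^ 2),
          neg_mem (mul_mem (mul_mem (mul_mem (intCast_mem _ s)
            (pow_mem (intCast_mem _ T) 2)) hIR) (pow_mem hθR 2)), ?_⟩
        push_cast
        linear_combination hrel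
    | zero => exact ⟨0, 0, zero_mem _, by norm_num⟩
    | one => exact ⟨1, 0, zero_mem _, by norm_num⟩
    | add x y hx hy ihx ihy =>
      obtain ⟨n, β, hβ, hx4⟩ := ihx
      obtain ⟨m, γ, hγ, hy4⟩ := ihy
      refine ⟨n + m, β + γ + 2 * x ^ 3 * y + 3 * x ^ 2 * y ^ 2 + 2 * x * y ^ 3,
        ?_, ?_⟩
      · refine add_mem (add_mem (add_mem (add_mem hβ hγ) ?_) ?_) ?_
        · exact mul_mem (mul_mem (ofNat_mem _ 2) (pow_mem hx 3)) hy
        · exact mul_mem (mul_mem (ofNat_mem _ 3) (pow_mem hx 2)) (pow_mem hy 2)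
        · exact mul_mem (mul_mem (ofNat_mem _ 2) hx) (pow_mem hy 3)
      · push_cast
        linear_combination hx4 + hy4
    | neg x hx ihx =>
      obtain ⟨n, β, hβ, hx4⟩ := ihx
      exact ⟨n, β, hβ, by linear_combination hx4⟩
    | mul x y hx hy ihx ihy =>
      obtain ⟨n, β, hβ, hx4⟩ := ihx
      obtain ⟨m, γ, hγ, hy4⟩ := ihy
      refine ⟨n * m, (n : ℂ) * γ + (m : ℂ) * β + 2 * β * γ, ?_, ?_⟩
      · exact add_mem (add_mem (mul_mem (intCast_mem _ n) hγ)
          (mul_mem (intCast_mem _ m) hβ)) (mul_mem (mul_mem (ofNat_mem _ 2) hβ) hγ)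
      · push_cast
        linear_combination (y ^ 4) * hx4 + ((n : ℂ) + 2 * β) * hy4
  obtain ⟨n, β, hβR, hα4⟩ := hpow4 α hαR
  -- elements of ℤ[α] are congruent mod 2 to ℤ-combinations of 1, α, α², α³
  have hP2 : ∀ x ∈ Subring.closure ({α} : Set ℂ),
      ∃ c0 c1 c2 c3 : ℤ, ∃ ρ, ρ ∈ Subring.closure ({Complex.I, ϑ} : Set ℂ) ∧
        x = (c0 : ℂ) + c1 * α + c2 * α ^ 2 + c3 * α ^ 3 + 2 * ρ := by
    intro x hx
    induction hx using Subring.closure_induction with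
    | mem z hz =>
      simp only [Set.mem_singleton_iff] at hz
      subst hz
      exact ⟨0, 1, 0, 0, 0, zero_mem _, by push_cast; ring⟩
    | zero => exact ⟨0, 0, 0, 0, 0, zero_mem _, by push_cast; ring⟩
    | one => exact ⟨1, 0, 0, 0, 0, zero_mem _, by push_cast; ring⟩
    | add x y hx hy ihx ihy =>
      obtain ⟨c0, c1, c2, c3, ρ, hρ, hxe⟩ := ihx
      obtain ⟨d0, d1, d2, d3, ρ', hρ', hye⟩ := ihy
      exact ⟨c0 + d0, c1 + d1, c2 + d2, c3 + d3, ρ + ρ', add_mem hρ hρ',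
        by push_cast; linear_combination hxe + hye⟩
    | neg x hx ihx =>
      obtain ⟨c0, c1, c2, c3, ρ, hρ, hxe⟩ := ihx
      exact ⟨-c0, -c1, -c2, -c3, -ρ, neg_mem hρ,
        by push_cast; linear_combination -hxe⟩
    | mul x y hx hy ihx ihy =>
      obtain ⟨c0, c1, c2, c3, ρ, hρ, hxe⟩ := ihx
      obtain ⟨d0, d1, d2, d3, ρ', hρ', hye⟩ := ihy
      have hyR : y ∈ Subring.closure ({Complex.I, ϑ} : Set ℂ) := by
        rw [← hgen]; exact hy
      refine ⟨c0 * d0 + n * (c1 * d3 + c2 * d2 + c3 * d1),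
        c0 * d1 + c1 * d0 + n * (c2 * d3 + c3 * d2),
        c0 * d2 + c1 * d1 + c2 * d0 + n * (c3 * d3),
        c0 * d3 + c1 * d2 + c2 * d1 + c3 * d0,
        ((c1 * d3 + c2 * d2 + c3 * d1 : ℤ) : ℂ) * β
          + ((c2 * d3 + c3 * d2 : ℤ) : ℂ) * (α * β)
          + ((c3 * d3 : ℤ) : ℂ) * (α ^ 2 * β)
          + ((c0 : ℂ) + c1 * α + c2 * α ^ 2 + c3 * α ^ 3) * ρ' + ρ * y, ?_, ?_⟩
      · refine add_mem (add_mem (add_mem (add_mem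
          (mul_mem (intCast_mem _ _) hβR)
          (mul_mem (intCast_mem _ _) (mul_mem hαR hβR)))
          (mul_mem (intCast_mem _ _) (mul_mem (pow_mem hαR 2) hβR))) ?_)
          (mul_mem hρ hyR)
        exact mul_mem (add_mem (add_mem (add_mem (intCast_mem _ _)
          (mul_mem (intCast_mem _ _) hαR))
          (mul_mem (intCast_mem _ _) (pow_mem hαR 2)))
          (mul_mem (intCast_mem _ _) (pow_mem hαR 3))) hρ'
      · push_cast
        linear_combination y * hxe
          + ((c0 : ℂ) + c1 * α + c2 * α ^ 2 + c3 * α ^ 3) * hye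
          + (((c1 : ℂ) * d3 + c2 * d2 + c3 * d1) + ((c2 : ℂ) * d3 + c3 * d2) * α
            + ((c3 : ℂ) * d3) * α ^ 2) * hα4
  -- the eight basis monomials, each written mod 2 in terms of powers of α
  obtain ⟨c00, c01, c02, c03, ρ0, hρ0, hB0⟩ :=
    hP2 1 (one_mem _)
  obtain ⟨c10, c11, c12, c13, ρ1, hρ1, hB1⟩ :=
    hP2 Complex.I (by rw [hgen]; exact hIR)
  obtain ⟨c20, c21, c22, c23, ρ2, hρ2, hB2⟩ :=
    hP2 ϑ (by rw [hgen]; exact hθR)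
  obtain ⟨c30, c31, c32, c33, ρ3, hρ3, hB3⟩ :=
    hP2 (Complex.I * ϑ) (by rw [hgen]; exact mul_mem hIR hθR)
  obtain ⟨c40, c41, c42, c43, ρ4, hρ4, hB4⟩ :=
    hP2 (ϑ ^ 2) (by rw [hgen]; exact pow_mem hθR 2)
  obtain ⟨c50, c51, c52, c53, ρ5, hρ5, hB5⟩ :=
    hP2 (Complex.I * ϑ ^ 2) (by rw [hgen]; exact mul_mem hIR (pow_mem hθR 2))
  obtain ⟨c60, c61, c62, c63, ρ6, hρ6, hB6⟩ :=
    hP2 (ϑ ^ 3) (by rw [hgen]; exact pow_mem hθR 3)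
  obtain ⟨c70, c71, c72, c73, ρ7, hρ7, hB7⟩ :=
    hP2 (Complex.I * ϑ ^ 3) (by rw [hgen]; exact mul_mem hIR (pow_mem hθR 3))
  -- pigeonhole over 𝔽₂
  have hcard : Fintype.card (ZMod 2 × ZMod 2 × ZMod 2 × ZMod 2)
      < Fintype.card (Fin 8 → ZMod 2) := by
    simp [Fintype.card_prod, Fintype.card_fun]
  obtain ⟨e, e', hne, hFe⟩ := Fintype.exists_ne_map_eq_of_card_lt
    (fun e : Fin 8 → ZMod 2 =>
      ((e 0 * ((c00 : ℤ) : ZMod 2) + e 1 * ((c10 : ℤ) : ZMod 2)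
        + e 2 * ((c20 : ℤ) : ZMod 2) + e 3 * ((c30 : ℤ) : ZMod 2)
        + e 4 * ((c40 : ℤ) : ZMod 2) + e 5 * ((c50 : ℤ) : ZMod 2)
        + e 6 * ((c60 : ℤ) : ZMod 2) + e 7 * ((c70 : ℤ) : ZMod 2),
       e 0 * ((c01 : ℤ) : ZMod 2) + e 1 * ((c11 : ℤ) : ZMod 2)
        + e 2 * ((c21 : ℤ) : ZMod 2) + e 3 * ((c31 : ℤ) : ZMod 2)
        + e 4 * ((c41 : ℤ) : ZMod 2) + e 5 * ((c51 : ℤ) : ZMod 2)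
        + e 6 * ((c61 : ℤ) : ZMod 2) + e 7 * ((c71 : ℤ) : ZMod 2),
       e 0 * ((c02 : ℤ) : ZMod 2) + e 1 * ((c12 : ℤ) : ZMod 2)
        + e 2 * ((c22 : ℤ) : ZMod 2) + e 3 * ((c32 : ℤ) : ZMod 2)
        + e 4 * ((c42 : ℤ) : ZMod 2) + e 5 * ((c52 : ℤ) : ZMod 2)
        + e 6 * ((c62 : ℤ) : ZMod 2) + e 7 * ((c72 : ℤ) : ZMod 2),
       e 0 * ((c03 : ℤ) : ZMod 2) + e 1 * ((c13 : ℤ) : ZMod 2)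
        + e 2 * ((c23 : ℤ) : ZMod 2) + e 3 * ((c33 : ℤ) : ZMod 2)
        + e 4 * ((c43 : ℤ) : ZMod 2) + e 5 * ((c53 : ℤ) : ZMod 2)
        + e 6 * ((c63 : ℤ) : ZMod 2) + e 7 * ((c73 : ℤ) : ZMod 2)))) hcard
  simp only [Prod.mk.injEq] at hFe
  obtain ⟨hF0, hF1, hF2, hF3⟩ := hFe
  -- divisibility of the coefficient sums
  have hd0 : (2 : ℤ) ∣ (((e 0 - e' 0).val : ℤ) * c00 + ((e 1 - e' 1).val : ℤ) * c10
      + ((e 2 - e' 2).val : ℤ) * c20 + ((e 3 - e' 3).val : ℤ) * c30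
      + ((e 4 - e' 4).val : ℤ) * c40 + ((e 5 - e' 5).val : ℤ) * c50
      + ((e 6 - e' 6).val : ℤ) * c60 + ((e 7 - e' 7).val : ℤ) * c70) := by
    apply (ZMod.intCast_zmod_eq_zero_iff_dvd _ 2).1
    push_cast
    simp only [ZMod.natCast_val, ZMod.cast_id]
    linear_combination hF0
  have hd1 : (2 : ℤ) ∣ (((e 0 - e' 0).val : ℤ) * c01 + ((e 1 - e' 1).val : ℤ) * c11
      + ((e 2 - e' 2).val : ℤ) * c21 + ((e 3 - e' 3).val : ℤ) * c31
      + ((e 4 - e' 4).val : ℤ) * c41 + ((e 5 - e' 5).val : ℤ) * c51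
      + ((e 6 - e' 6).val : ℤ) * c61 + ((e 7 - e' 7).val : ℤ) * c71) := by
    apply (ZMod.intCast_zmod_eq_zero_iff_dvd _ 2).1
    push_cast
    simp only [ZMod.natCast_val, ZMod.cast_id]
    linear_combination hF1
  have hd2 : (2 : ℤ) ∣ (((e 0 - e' 0).val : ℤ) * c02 + ((e 1 - e' 1).val : ℤ) * c12
      + ((e 2 - e' 2).val : ℤ) * c22 + ((e 3 - e' 3).val : ℤ) * c32
      + ((e 4 - e' 4).val : ℤ) * c42 + ((e 5 - e' 5).val : ℤ) * c52
      + ((e 6 - e' 6).val : ℤ) * c62 + ((e 7 - e' 7).val : ℤ) * c72) := by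
    apply (ZMod.intCast_zmod_eq_zero_iff_dvd _ 2).1
    push_cast
    simp only [ZMod.natCast_val, ZMod.cast_id]
    linear_combination hF2
  have hd3 : (2 : ℤ) ∣ (((e 0 - e' 0).val : ℤ) * c03 + ((e 1 - e' 1).val : ℤ) * c13
      + ((e 2 - e' 2).val : ℤ) * c23 + ((e 3 - e' 3).val : ℤ) * c33
      + ((e 4 - e' 4).val : ℤ) * c43 + ((e 5 - e' 5).val : ℤ) * c53
      + ((e 6 - e' 6).val : ℤ) * c63 + ((e 7 - e' 7).val : ℤ) * c73) := by
    apply (ZMod.intCast_zmod_eq_zero_iff_dvd _ 2).1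
    push_cast
    simp only [ZMod.natCast_val, ZMod.cast_id]
    linear_combination hF3
  obtain ⟨m0, hm0⟩ := hd0
  obtain ⟨m1, hm1⟩ := hd1
  obtain ⟨m2, hm2⟩ := hd2
  obtain ⟨m3, hm3⟩ := hd3
  -- cast the divisibility equations to ℂ
  have hm0c : (((e 0 - e' 0).val : ℕ) : ℂ) * c00 + ((e 1 - e' 1).val : ℂ) * c10
      + ((e 2 - e' 2).val : ℂ) * c20 + ((e 3 - e' 3).val : ℂ) * c30
      + ((e 4 - e' 4).val : ℂ) * c40 + ((e 5 - e' 5).val : ℂ) * c50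
      + ((e 6 - e' 6).val : ℂ) * c60 + ((e 7 - e' 7).val : ℂ) * c70 = 2 * m0 := by
    exact_mod_cast congrArg (Int.cast : ℤ → ℂ) hm0
  have hm1c : (((e 0 - e' 0).val : ℕ) : ℂ) * c01 + ((e 1 - e' 1).val : ℂ) * c11
      + ((e 2 - e' 2).val : ℂ) * c21 + ((e 3 - e' 3).val : ℂ) * c31
      + ((e 4 - e' 4).val : ℂ) * c41 + ((e 5 - e' 5).val : ℂ) * c51
      + ((e 6 - e' 6).val : ℂ) * c61 + ((e 7 - e' 7).val : ℂ) * c71 = 2 * m1 := by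
    exact_mod_cast congrArg (Int.cast : ℤ → ℂ) hm1
  have hm2c : (((e 0 - e' 0).val : ℕ) : ℂ) * c02 + ((e 1 - e' 1).val : ℂ) * c12
      + ((e 2 - e' 2).val : ℂ) * c22 + ((e 3 - e' 3).val : ℂ) * c32
      + ((e 4 - e' 4).val : ℂ) * c42 + ((e 5 - e' 5).val : ℂ) * c52
      + ((e 6 - e' 6).val : ℂ) * c62 + ((e 7 - e' 7).val : ℂ) * c72 = 2 * m2 := by
    exact_mod_cast congrArg (Int.cast : ℤ → ℂ) hm2
  have hm3c : (((e 0 - e' 0).val : ℕ) : ℂ) * c03 + ((e 1 - e' 1).val : ℂ) * c13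
      + ((e 2 - e' 2).val : ℂ) * c23 + ((e 3 - e' 3).val : ℂ) * c33
      + ((e 4 - e' 4).val : ℂ) * c43 + ((e 5 - e' 5).val : ℂ) * c53
      + ((e 6 - e' 6).val : ℂ) * c63 + ((e 7 - e' 7).val : ℂ) * c73 = 2 * m3 := by
    exact_mod_cast congrArg (Int.cast : ℤ → ℂ) hm3
  -- the combined element is twice an element of the order
  have hρstarR : (m0 : ℂ) + m1 * α + m2 * α ^ 2 + m3 * α ^ 3
      + ((e 0 - e' 0).val : ℂ) * ρ0 + ((e 1 - e' 1).val : ℂ) * ρ1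
      + ((e 2 - e' 2).val : ℂ) * ρ2 + ((e 3 - e' 3).val : ℂ) * ρ3
      + ((e 4 - e' 4).val : ℂ) * ρ4 + ((e 5 - e' 5).val : ℂ) * ρ5
      + ((e 6 - e' 6).val : ℂ) * ρ6 + ((e 7 - e' 7).val : ℂ) * ρ7
      ∈ Subring.closure ({Complex.I, ϑ} : Set ℂ) := by
    refine add_mem (add_mem (add_mem (add_mem (add_mem (add_mem (add_mem
      (add_mem (add_mem (add_mem (add_mem (intCast_mem _ m0)
      (mul_mem (intCast_mem _ m1) hαR))
      (mul_mem (intCast_mem _ m2) (pow_mem hαR 2)))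
      (mul_mem (intCast_mem _ m3) (pow_mem hαR 3)))
      (mul_mem (natCast_mem _ _) hρ0)) (mul_mem (natCast_mem _ _) hρ1))
      (mul_mem (natCast_mem _ _) hρ2)) (mul_mem (natCast_mem _ _) hρ3))
      (mul_mem (natCast_mem _ _) hρ4)) (mul_mem (natCast_mem _ _) hρ5))
      (mul_mem (natCast_mem _ _) hρ6)) (mul_mem (natCast_mem _ _) hρ7)
  have hsum : ((e 0 - e' 0).val : ℂ) * 1 + ((e 1 - e' 1).val : ℂ) * Complex.I
      + ((e 2 - e' 2).val : ℂ) * ϑ + ((e 3 - e' 3).val : ℂ) * (Complex.I * ϑ)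
      + ((e 4 - e' 4).val : ℂ) * ϑ ^ 2 + ((e 5 - e' 5).val : ℂ) * (Complex.I * ϑ ^ 2)
      + ((e 6 - e' 6).val : ℂ) * ϑ ^ 3 + ((e 7 - e' 7).val : ℂ) * (Complex.I * ϑ ^ 3)
      = 2 * ((m0 : ℂ) + m1 * α + m2 * α ^ 2 + m3 * α ^ 3
      + ((e 0 - e' 0).val : ℂ) * ρ0 + ((e 1 - e' 1).val : ℂ) * ρ1
      + ((e 2 - e' 2).val : ℂ) * ρ2 + ((e 3 - e' 3).val : ℂ) * ρ3
      + ((e 4 - e' 4).val : ℂ) * ρ4 + ((e 5 - e' 5).val : ℂ) * ρ5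
      + ((e 6 - e' 6).val : ℂ) * ρ6 + ((e 7 - e' 7).val : ℂ) * ρ7) := by
    linear_combination ((e 0 - e' 0).val : ℂ) * hB0 + ((e 1 - e' 1).val : ℂ) * hB1
      + ((e 2 - e' 2).val : ℂ) * hB2 + ((e 3 - e' 3).val : ℂ) * hB3
      + ((e 4 - e' 4).val : ℂ) * hB4 + ((e 5 - e' 5).val : ℂ) * hB5
      + ((e 6 - e' 6).val : ℂ) * hB6 + ((e 7 - e' 7).val : ℂ) * hB7
      + hm0c + α * hm1c + α ^ 2 * hm2c + α ^ 3 * hm3c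
  -- coordinates of that element of the order
  obtain ⟨a0, a1, a2, a3, a4, a5, a6, a7, ha⟩ := hL _ hρstarR
  -- linear independence gives evenness of all .val's
  obtain ⟨g0, g1, g2, g3, g4, g5, g6, g7⟩ :=
    indepB T s hT0 hs hirr ϑ hϑ hrel
      (((e 0 - e' 0).val : ℤ) - 2 * a0) (((e 1 - e' 1).val : ℤ) - 2 * a1)
      (((e 2 - e' 2).val : ℤ) - 2 * a2) (((e 3 - e' 3).val : ℤ) - 2 * a3)
      (((e 4 - e' 4).val : ℤ) - 2 * a4) (((e 5 - e' 5).val : ℤ) - 2 * a5)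
      (((e 6 - e' 6).val : ℤ) - 2 * a6) (((e 7 - e' 7).val : ℤ) - 2 * a7)
      (by push_cast; linear_combination hsum + 2 * ha)
  have key : ∀ (z : ZMod 2) (a : ℤ), (z.val : ℤ) - 2 * a = 0 → z = 0 := by
    intro z a hza
    have hlt : z.val < 2 := ZMod.val_lt z
    have : z.val = 0 := by omega
    exact (ZMod.val_eq_zero z).1 this
  apply hne
  funext j
  have he0 : e 0 = e' 0 := sub_eq_zero.1 (key _ _ g0)
  have he1 : e 1 = e' 1 := sub_eq_zero.1 (key _ _ g1)
  have he2 : e 2 = e' 2 := sub_eq_zero.1 (key _ _ g2)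
  have he3 : e 3 = e' 3 := sub_eq_zero.1 (key _ _ g3)
  have he4 : e 4 = e' 4 := sub_eq_zero.1 (key _ _ g4)
  have he5 : e 5 = e' 5 := sub_eq_zero.1 (key _ _ g5)
  have he6 : e 6 = e' 6 := sub_eq_zero.1 (key _ _ g6)
  have he7 : e 7 = e' 7 := sub_eq_zero.1 (key _ _ g7)
  fin_cases j <;> assumption

/-- For an integer `T` with `|T| > 11` and `ϑ` a root of the
irreducible polynomial `x⁸ + (4T⁴ + 2)x⁴ + 1`, the order `O = ℤ[i][ϑ]` admits
no power integral basis: there is no `α ∈ O` with `ℤ[α] = O`. -/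
theorem stmt_5 (T : ℤ) (hT : 11 < |T|)
    (hirr : Irreducible (X ^ 8 + C (((4 * T ^ 4 + 2 : ℤ) : ℚ)) * X ^ 4 + 1 : ℚ[X]))
    (ϑ : ℂ) (hϑ : ϑ ^ 8 + (4 * (T : ℂ) ^ 4 + 2) * ϑ ^ 4 + 1 = 0) :
    ¬ ∃ α ∈ Subring.closure {Complex.I, ϑ},
        Subring.closure {α} = Subring.closure {Complex.I, ϑ} := by
  rintro ⟨α, hαR, hgen⟩
  have hT0 : T ≠ 0 := by
    intro h
    rw [h] at hT
    norm_num at hT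
  have hfac : (ϑ ^ 4 + 2 * (T : ℂ) ^ 2 * Complex.I * ϑ ^ 2 + 1)
      * (ϑ ^ 4 - 2 * (T : ℂ) ^ 2 * Complex.I * ϑ ^ 2 + 1) = 0 := by
    linear_combination hϑ - 4 * (T : ℂ) ^ 4 * ϑ ^ 4 * Complex.I_sq
  obtain ⟨s, hs, hrel⟩ : ∃ s : ℤ, (s = 1 ∨ s = -1) ∧
      ϑ ^ 4 = -1 - 2 * (s : ℂ) * (T : ℂ) ^ 2 * Complex.I * ϑ ^ 2 := by
    rcases mul_eq_zero.1 hfac with h | h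
    · exact ⟨1, Or.inl rfl, by push_cast; linear_combination h⟩
    · exact ⟨-1, Or.inr rfl, by push_cast; linear_combination h⟩
  exact main_aux T s hT0 hs hirr ϑ hϑ hrel α hαR hgen
end

section
/- Let d > 0 be a squarefree integer with −d ≡ 2 or 3 (mod 4), and set M = Q(i√d) with ring of integers Z_M = Z[i√d]. Let t ∈ Z_M be a parameter with |t| > 245 such that the polynomial x⁴ − t²x² + 1 is irreducible over M, let ξ be a root of x⁴ − t²x² + 1, and let O = Z_M[ξ] be the order generated by ξ over Z_M in the octic field K = M(ξ). Then O admits no power integral basis: there is no element α ∈ O with Z[α] = O. -/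
open Polynomial

/-- The imaginary quadratic field `M = ℚ(i√d)` realized inside `ℂ`. -/
noncomputable def Mfield (d : ℤ) : IntermediateField ℚ ℂ :=
  IntermediateField.adjoin ℚ {(Complex.I * (Real.sqrt (d : ℝ) : ℂ) : ℂ)}

open TrivSqZeroExt

noncomputable section PIB10

def kpoly : (ZMod 2)[X] := X^2 + X + 1

abbrev kk := AdjoinRoot kpoly

lemma kpoly_deg : kpoly.degree = 2 := by
  have h1 : ((X : (ZMod 2)[X]) + 1).degree = 1 := by
    simpa using Polynomial.degree_X_add_C (1 : ZMod 2)
  have h2 : ((X : (ZMod 2)[X]) ^ 2).degree = 2 := Polynomial.degree_X_pow 2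
  have : kpoly = X^2 + (X + 1) := by unfold kpoly; ring
  rw [this, Polynomial.degree_add_eq_left_of_degree_lt, h2]
  rw [h1, h2]; decide

instance : Nontrivial kk := AdjoinRoot.nontrivial _ (by rw [kpoly_deg]; decide)

lemma two_kk : (2 : kk) = 0 := by
  have h : ((1 : ZMod 2) + 1) = 0 := by decide
  have := congrArg (algebraMap (ZMod 2) kk) h
  rw [map_add, map_one, map_zero] at this
  rw [← one_add_one_eq_two, this]

def ρ : kk := AdjoinRoot.root kpoly

lemma ρ_rel : ρ^2 + ρ + 1 = 0 := by
  have h := AdjoinRoot.mk_self (f := kpoly)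
  unfold kpoly at h
  rw [map_add, map_add, map_one, map_pow, AdjoinRoot.mk_X] at h
  exact h

abbrev BB := TrivSqZeroExt kk (kk × kk)

def XB (lam : kk) : BB := inl lam + inr (1,0)
def YB (ep : kk) : BB := inl ep + inr (0,1)

lemma mul_formula (r r' : kk) (v v' : kk × kk) :
    (inl r + inr v) * (inl r' + inr v' : BB) = inl (r * r') + inr (r • v' + r' • v) := by
  rw [mul_add, add_mul, add_mul, inl_mul_inl, inl_mul_inr, inr_mul_inl, inr_mul_inr,
    add_zero, op_smul_eq_smul, inr_add, add_assoc]
  congr 1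
  rw [← inr_add, ← inr_add, add_comm]

lemma sq_formula (r : kk) (v : kk × kk) :
    ((inl r + inr v : BB))^2 = inl (r^2) + inr ((2*r) • v) := by
  rw [sq, mul_formula, ← sq]
  congr 1
  rw [← add_smul, two_mul]

lemma XB_sq (lam : kk) : (XB lam)^2 = inl (lam^2) := by
  rw [XB, sq_formula, two_kk, zero_mul, zero_smul, inr_zero, add_zero]

lemma YB_sq (ep : kk) : (YB ep)^2 = inl (ep^2) := by
  rw [YB, sq_formula, two_kk, zero_mul, zero_smul, inr_zero, add_zero]

/-- the subring `k + k·(snd q)` of `BB` -/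
def TT (q : BB) : Subring BB where
  carrier := {b | ∃ r s : kk, b = inl r + inr (s • q.snd)}
  zero_mem' := ⟨0, 0, by simp⟩
  one_mem' := ⟨1, 0, by simp⟩
  add_mem' := by
    rintro x y ⟨r, s, rfl⟩ ⟨r', s', rfl⟩
    exact ⟨r + r', s + s', by rw [add_smul, inr_add, inl_add]; abel⟩
  neg_mem' := by
    rintro x ⟨r, s, rfl⟩
    exact ⟨-r, -s, by rw [neg_smul, inr_neg, inl_neg, neg_add]⟩
  mul_mem' := by
    rintro x y ⟨r, s, rfl⟩ ⟨r', s', rfl⟩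
    refine ⟨r * r', r * s' + r' * s, ?_⟩
    rw [mul_formula]
    congr 2
    rw [smul_smul, smul_smul, ← add_smul]

lemma self_mem_TT (q : BB) : q ∈ TT q :=
  ⟨q.fst, 1, by rw [one_smul, inl_fst_add_inr_snd_eq]⟩

lemma eval_mem_TT (q : BB) (P : Polynomial ℤ) :
    P.eval₂ (Int.castRingHom BB) q ∈ TT q := by
  induction P using Polynomial.induction_on' with
  | add p q hp hq => rw [Polynomial.eval₂_add]; exact add_mem hp hq
  | monomial n a =>
    rw [Polynomial.eval₂_monomial]
    exact mul_mem (by exact_mod_cast intCast_mem (TT q) a) (pow_mem (self_mem_TT q) n)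

lemma final_contra (q : BB) (lam ep : kk)
    (hX : XB lam ∈ TT q) (hY : YB ep ∈ TT q) : False := by
  obtain ⟨r, s, hx⟩ := hX
  obtain ⟨r', s', hy⟩ := hY
  have hx2 := congrArg TrivSqZeroExt.snd hx
  have hy2 := congrArg TrivSqZeroExt.snd hy
  simp only [XB, YB, snd_add, snd_inl, snd_inr, zero_add] at hx2 hy2
  have hx21 := congrArg Prod.fst hx2
  have hx22 := congrArg Prod.snd hx2
  have hy21 := congrArg Prod.fst hy2
  have hy22 := congrArg Prod.snd hy2
  simp only [Prod.smul_fst, Prod.smul_snd, smul_eq_mul] at hx21 hx22 hy21 hy22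
  have : (1 : kk) = 0 := by
    calc (1:kk) = (s * q.snd.1) * (s' * q.snd.2) := by rw [← hx21, ← hy22, one_mul]
    _ = (s * q.snd.2) * (s' * q.snd.1) := by ring
    _ = 0 := by rw [← hx22, ← hy21, zero_mul]
  exact one_ne_zero this



/-! ### Part B : polynomial presentation and kernel transfer -/

def ev2 (g : ℂ) : Polynomial ℤ →+* ℂ := eval₂RingHom (Int.castRingHom ℂ) g
def evC (g ξ : ℂ) : Polynomial (Polynomial ℤ) →+* ℂ := eval₂RingHom (ev2 g) ξ
def ψ2 (ep : kk) : Polynomial ℤ →+* BB := eval₂RingHom (Int.castRingHom BB) (YB ep)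
def ψB (ep lam : kk) : Polynomial (Polynomial ℤ) →+* BB := eval₂RingHom (ψ2 ep) (XB lam)

def P1 (d : ℤ) : Polynomial ℤ := X^2 + C d
def FF (d a b : ℤ) : Polynomial (Polynomial ℤ) :=
  X^4 - C (C (a^2 - b^2*d) + C (2*a*b) * X) * X^2 + 1

lemma P1_monic (d : ℤ) : (P1 d).Monic := by
  apply Polynomial.monic_X_pow_add
  calc (C d).degree ≤ 0 := Polynomial.degree_C_le
  _ < (2:ℕ) := by decide

lemma P1_deg (d : ℤ) : (P1 d).degree = 2 := by
  have h : (C d : Polynomial ℤ).degree < ((X:Polynomial ℤ)^2).degree := by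
    rw [Polynomial.degree_X_pow]
    calc (C d).degree ≤ 0 := Polynomial.degree_C_le
    _ < (2:ℕ) := by decide
  rw [P1, Polynomial.degree_add_eq_left_of_degree_lt h, Polynomial.degree_X_pow]
  rfl

lemma quart_eq {F : Type*} [CommRing F] (c : F) :
    (X^4 - C c * X^2 + 1 : F[X]) = X^4 + (1 - C c * X^2) := by ring

lemma quart_low_deg {F : Type*} [CommRing F] (c : F) :
    (1 - C c * X^2 : F[X]).degree ≤ 2 := by
  refine le_trans (Polynomial.degree_sub_le _ _) ?_
  rw [max_le_iff]
  constructor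
  · exact le_trans Polynomial.degree_one_le (by decide)
  · exact Polynomial.degree_C_mul_X_pow_le 2 _

lemma quart_monic {F : Type*} [CommRing F] (c : F) :
    (X^4 - C c * X^2 + 1 : F[X]).Monic := by
  rw [quart_eq]
  apply Polynomial.monic_X_pow_add
  exact lt_of_le_of_lt (quart_low_deg c) (by decide)

lemma quart_deg {F : Type*} [CommRing F] [Nontrivial F] (c : F) :
    (X^4 - C c * X^2 + 1 : F[X]).degree = 4 := by
  have h : (1 - C c * X^2 : F[X]).degree < ((X : F[X])^4).degree := by
    rw [Polynomial.degree_X_pow]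
    exact lt_of_le_of_lt (quart_low_deg c) (by decide)
  rw [quart_eq, Polynomial.degree_add_eq_left_of_degree_lt h, Polynomial.degree_X_pow]
  rfl

lemma FF_monic (d a b : ℤ) : (FF d a b).Monic := quart_monic _

lemma FF_deg (d a b : ℤ) : (FF d a b).degree = 4 := quart_deg _

lemma natdeg_lt_of_deg_lt {R : Type*} [Semiring R] {p : R[X]} {n : ℕ} (hn : 0 < n)
    (h : p.degree < (n:ℕ)) : p.natDegree < n := by
  rcases eq_or_ne p 0 with rfl | hp
  · simpa using hn
  · exact (Polynomial.natDegree_lt_iff_degree_lt hp).2 h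

lemma poly_eq_zero_of {s : Polynomial ℤ} (hdeg : s.natDegree ≤ 1)
    (h0 : s.coeff 0 = 0) (h1 : s.coeff 1 = 0) : s = 0 := by
  have h := Polynomial.eq_X_add_C_of_natDegree_le_one hdeg
  rw [h0, h1] at h
  simpa using h

lemma ev2_P1 (d : ℤ) (g : ℂ) (hg : g^2 = -(d:ℂ)) : ev2 g (P1 d) = 0 := by
  simp only [ev2, P1, coe_eval₂RingHom, Polynomial.eval₂_add, Polynomial.eval₂_pow,
    Polynomial.eval₂_X, Polynomial.eval₂_C]
  rw [hg]
  simp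

lemma ψ2_P1 (d : ℤ) (ep : kk) (hep : ep^2 + (d : kk) = 0) : ψ2 ep (P1 d) = 0 := by
  simp only [ψ2, P1, coe_eval₂RingHom, Polynomial.eval₂_add, Polynomial.eval₂_pow,
    Polynomial.eval₂_X, Polynomial.eval₂_C]
  rw [YB_sq]
  have hc : ((Int.castRingHom BB) d) = inl ((d : ℤ) : kk) := rfl
  rw [hc, ← inl_add, hep, inl_zero]

lemma evC_FF (d a b : ℤ) (g ξ : ℂ) (hg : g^2 = -(d:ℂ))
    (hξ' : ξ^4 - ((a:ℂ) + b*g)^2 * ξ^2 + 1 = 0) : evC g ξ (FF d a b) = 0 := by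
  simp only [evC, ev2, FF, coe_eval₂RingHom, Polynomial.eval₂_add, Polynomial.eval₂_sub,
    Polynomial.eval₂_mul, Polynomial.eval₂_pow, Polynomial.eval₂_X, Polynomial.eval₂_C,
    Polynomial.eval₂_one, Int.coe_castRingHom]
  push_cast
  linear_combination hξ' + (b:ℂ)^2 * ξ^2 * hg

lemma ψB_FF (d a b : ℤ) (ep lam : kk)
    (hlam : lam^4 + ((a^2 - b^2*d : ℤ) : kk)*lam^2 + 1 = 0) :
    ψB ep lam (FF d a b) = 0 := by
  simp only [ψB, ψ2, FF, coe_eval₂RingHom, Polynomial.eval₂_add, Polynomial.eval₂_sub,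
    Polynomial.eval₂_mul, Polynomial.eval₂_pow, Polynomial.eval₂_X, Polynomial.eval₂_C,
    Polynomial.eval₂_one]
  have h2ab : ((Int.castRingHom BB) (2*a*b)) = 0 := by
    have : ((2*a*b : ℤ) : kk) = 0 := by
      push_cast
      rw [two_kk]
      ring
    show ((2*a*b : ℤ) : BB) = 0
    have hc : ((2*a*b : ℤ) : BB) = inl ((2*a*b : ℤ) : kk) := rfl
    rw [hc, this, inl_zero]
  rw [h2ab, zero_mul, add_zero]
  have hc : ((Int.castRingHom BB) (a^2 - b^2*d)) = inl ((a^2 - b^2*d : ℤ) : kk) := rfl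
  have h4 : XB lam ^ 4 = inl (lam^4) := by
    rw [show (4:ℕ) = 2*2 from rfl, pow_mul, XB_sq, inl_pow, ← pow_mul]
  have h1 : (1 : BB) = inl 1 := (inl_one _).symm
  rw [h4, XB_sq, hc, inl_mul_inl, sub_eq_add_neg, ← inl_neg, ← inl_add, h1, ← inl_add]
  rw [show lam^4 + -(↑(a^2 - b^2*d) * lam^2) + 1 = 0 by
    linear_combination hlam - ((a^2 - b^2*d : ℤ) : kk) * lam^2 * two_kk]
  rw [inl_zero]

lemma ker_transfer (d a b : ℤ) (g ξ : ℂ) (hg : g^2 = -(d:ℂ))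
    (hξ' : ξ^4 - ((a:ℂ) + b*g)^2 * ξ^2 + 1 = 0)
    (hind : ∀ c0 c1 c2 c3 e0 e1 e2 e3 : ℤ,
      ((c0:ℂ) + e0*g) + ((c1:ℂ) + e1*g)*ξ + ((c2:ℂ) + e2*g)*ξ^2 + ((c3:ℂ) + e3*g)*ξ^3 = 0 →
      c0 = 0 ∧ c1 = 0 ∧ c2 = 0 ∧ c3 = 0 ∧ e0 = 0 ∧ e1 = 0 ∧ e2 = 0 ∧ e3 = 0)
    (lam ep : kk) (hlam : lam^4 + ((a^2 - b^2*d : ℤ) : kk)*lam^2 + 1 = 0)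
    (hep : ep^2 + (d : kk) = 0)
    (p : Polynomial (Polynomial ℤ)) (hp : evC g ξ p = 0) : ψB ep lam p = 0 := by
  set r := p %ₘ FF d a b with hrdef
  have hmod : r + FF d a b * (p /ₘ FF d a b) = p :=
    Polynomial.modByMonic_add_div p (FF d a b)
  have hrdeg : r.natDegree < 4 := by
    apply natdeg_lt_of_deg_lt (by norm_num)
    have := Polynomial.degree_modByMonic_lt p (FF_monic d a b)
    rw [FF_deg] at this
    exact_mod_cast this
  have hrsum : r = ∑ i ∈ Finset.range 4, Polynomial.monomial i (r.coeff i) :=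
    Polynomial.as_sum_range' r 4 hrdeg
  -- the inner-coefficient decompositions
  set s : ℕ → Polynomial ℤ := fun i => r.coeff i %ₘ P1 d with hsdef
  set q : ℕ → Polynomial ℤ := fun i => r.coeff i /ₘ P1 d with hqdef
  have hsq : ∀ i, s i + P1 d * q i = r.coeff i := fun i =>
    Polynomial.modByMonic_add_div _ (P1 d)
  have hsdeg : ∀ i, (s i).natDegree ≤ 1 := by
    intro i
    have h2 : (s i).degree < 2 := by
      have := Polynomial.degree_modByMonic_lt (r.coeff i) (P1_monic d)
      rwa [P1_deg] at this
    have : (s i).natDegree < 2 := natdeg_lt_of_deg_lt (by norm_num) (by exact_mod_cast h2)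
    omega
  have hev2s : ∀ i, ev2 g (r.coeff i) = ((s i).coeff 0 : ℂ) + ((s i).coeff 1 : ℂ) * g := by
    intro i
    rw [← hsq i, map_add, map_mul, ev2_P1 d g hg, zero_mul, add_zero]
    conv_lhs => rw [Polynomial.eq_X_add_C_of_natDegree_le_one (hsdeg i)]
    simp only [ev2, coe_eval₂RingHom, Polynomial.eval₂_add, Polynomial.eval₂_mul,
      Polynomial.eval₂_X, Polynomial.eval₂_C, Int.coe_castRingHom]
    ring
  have hevr : evC g ξ r = 0 := by
    have := congrArg (evC g ξ) hmod
    rw [map_add, map_mul, evC_FF d a b g ξ hg hξ', zero_mul, add_zero, hp] at this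
    exact this
  have hexp : evC g ξ r = ∑ i ∈ Finset.range 4, ev2 g (r.coeff i) * ξ^i := by
    conv_lhs => rw [hrsum]
    rw [map_sum]
    refine Finset.sum_congr rfl fun i _ => ?_
    simp only [evC, coe_eval₂RingHom, Polynomial.eval₂_monomial]
  have hsum0 : (((s 0).coeff 0 :ℂ) + (s 0).coeff 1 * g)
      + (((s 1).coeff 0 :ℂ) + (s 1).coeff 1 * g) * ξ
      + (((s 2).coeff 0 :ℂ) + (s 2).coeff 1 * g) * ξ^2
      + (((s 3).coeff 0 :ℂ) + (s 3).coeff 1 * g) * ξ^3 = 0 := by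
    have h := hevr
    rw [hexp] at h
    rw [Finset.sum_range_succ, Finset.sum_range_succ, Finset.sum_range_succ,
      Finset.sum_range_one] at h
    rw [hev2s 0, hev2s 1, hev2s 2, hev2s 3] at h
    linear_combination h
  obtain ⟨h00, h10, h20, h30, h01, h11, h21, h31⟩ :=
    hind _ _ _ _ _ _ _ _ hsum0
  have hs0 : ∀ i < 4, s i = 0 := by
    intro i hi
    interval_cases i
    · exact poly_eq_zero_of (hsdeg 0) h00 h01
    · exact poly_eq_zero_of (hsdeg 1) h10 h11
    · exact poly_eq_zero_of (hsdeg 2) h20 h21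
    · exact poly_eq_zero_of (hsdeg 3) h30 h31
  have hψr : ψB ep lam r = 0 := by
    conv_lhs => rw [hrsum]
    rw [map_sum]
    refine Finset.sum_eq_zero fun i hi => ?_
    have hco : ψ2 ep (r.coeff i) = 0 := by
      rw [← hsq i, map_add, map_mul, ψ2_P1 d ep hep, zero_mul, add_zero,
        hs0 i (Finset.mem_range.mp hi), map_zero]
    simp only [ψB, coe_eval₂RingHom, Polynomial.eval₂_monomial]
    rw [hco, zero_mul]
  have := congrArg (ψB ep lam) hmod
  rw [map_add, map_mul, ψB_FF d a b ep lam hlam, zero_mul, add_zero, hψr] at this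
  exact this.symm

/-! ### Part C : auxiliary lemmas for the main theorem -/

lemma closure_pair_le_range (g ξ : ℂ) :
    Subring.closure {g, ξ} ≤ (evC g ξ).range := by
  apply Subring.closure_le.2
  intro x hx
  rcases hx with rfl | hx
  · exact ⟨C X, by simp [evC, ev2, coe_eval₂RingHom]⟩
  · rw [Set.mem_singleton_iff] at hx
    subst hx
    exact ⟨X, by simp [evC, coe_eval₂RingHom]⟩

lemma closure_singleton_le_range (α : ℂ) :
    Subring.closure {α} ≤ (eval₂RingHom (Int.castRingHom ℂ) α).range := by
  apply Subring.closure_le.2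
  intro x hx
  rw [Set.mem_singleton_iff] at hx
  subst hx
  exact ⟨X, by simp [coe_eval₂RingHom]⟩

lemma mem_closure_g {d : ℤ} {g : ℂ} (hg : g^2 = -(d:ℂ)) {z : ℂ}
    (hz : z ∈ Subring.closure {g}) : ∃ a b : ℤ, z = a + b*g := by
  let SR : Subring ℂ :=
  { carrier := {z : ℂ | ∃ a b : ℤ, z = a + b*g}
    zero_mem' := ⟨0, 0, by push_cast; ring⟩
    one_mem' := ⟨1, 0, by push_cast; ring⟩
    add_mem' := by
      rintro x y ⟨a, b, rfl⟩ ⟨a', b', rfl⟩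
      exact ⟨a + a', b + b', by push_cast; ring⟩
    neg_mem' := by
      rintro x ⟨a, b, rfl⟩
      exact ⟨-a, -b, by push_cast; ring⟩
    mul_mem' := by
      rintro x y ⟨a, b, rfl⟩ ⟨a', b', rfl⟩
      refine ⟨a*a' - b*b'*d, a*b' + a'*b, by push_cast; linear_combination (b:ℂ)*(b':ℂ)*hg⟩ }
  have hle : Subring.closure {g} ≤ SR :=
    Subring.closure_le.2 (by
      intro x hx
      rw [Set.mem_singleton_iff] at hx
      exact hx ▸ ⟨0, 1, by push_cast; ring⟩)
  exact hle hz

lemma hom_eval₂_int {S T : Type*} [CommRing S] [CommRing T] (φ : S →+* T)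
    (P : Polynomial ℤ) (A : S) :
    φ (P.eval₂ (Int.castRingHom S) A) = P.eval₂ (Int.castRingHom T) (φ A) := by
  rw [Polynomial.hom_eval₂]
  congr 1
  exact Subsingleton.elim _ _

lemma ep_exists (d : ℤ) : ∃ ep : kk, ep^2 + (d : kk) = 0 := by
  rcases Int.even_or_odd d with ⟨m, hm⟩ | ⟨m, hm⟩
  · refine ⟨0, ?_⟩
    have h : ((d:ℤ) : kk) = 2 * (m : kk) := by rw [hm]; push_cast; ring
    linear_combination h + (m:kk) * two_kk
  · refine ⟨1, ?_⟩
    have h : ((d:ℤ) : kk) = 2 * (m : kk) + 1 := by rw [hm]; push_cast; ring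
    linear_combination h + ((m:kk) + 1) * two_kk

lemma lam_exists (c : ℤ) : ∃ lam : kk, lam^4 + (c : kk)*lam^2 + 1 = 0 := by
  rcases Int.even_or_odd c with ⟨m, hm⟩ | ⟨m, hm⟩
  · refine ⟨1, ?_⟩
    have h : ((c:ℤ) : kk) = 2 * (m : kk) := by rw [hm]; push_cast; ring
    linear_combination h + ((m:kk) + 1) * two_kk
  · refine ⟨ρ, ?_⟩
    have h : ((c:ℤ) : kk) = 2 * (m : kk) + 1 := by rw [hm]; push_cast; ring
    linear_combination ρ^2 * h + (ρ^2 - ρ + 1) * ρ_rel + ((m:kk) * ρ^2) * two_kk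

lemma int_lin_indep {d : ℤ} (hd : 0 < d) (c e : ℤ)
    (h : (c:ℂ) + (e:ℂ) * (Complex.I * (Real.sqrt (d:ℝ) : ℂ)) = 0) : c = 0 ∧ e = 0 := by
  have hre := congrArg Complex.re h
  have him := congrArg Complex.im h
  simp only [Complex.add_re, Complex.add_im, Complex.mul_re, Complex.mul_im,
    Complex.intCast_re, Complex.intCast_im, Complex.I_re, Complex.I_im,
    Complex.ofReal_re, Complex.ofReal_im, Complex.zero_re, Complex.zero_im] at hre him
  have hsd : Real.sqrt (d:ℝ) ≠ 0 := by
    refine ne_of_gt (Real.sqrt_pos.2 ?_)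
    exact_mod_cast hd
  constructor
  · exact_mod_cast (by linarith : (c:ℝ) = 0)
  · have he : (e:ℝ) * Real.sqrt (d:ℝ) = 0 := by linarith
    rcases mul_eq_zero.mp he with h' | h'
    · exact_mod_cast h'
    · exact absurd h' hsd


set_option synthInstance.maxHeartbeats 800000 in
set_option maxHeartbeats 1600000 in
lemma indep_of_irr (d : ℤ) (hd : 0 < d) (t : Mfield d)
    (hirr : Irreducible (X ^ 4 - C (t ^ 2) * X ^ 2 + 1 : Polynomial (Mfield d)))
    (ξ : ℂ) (hξ : ξ ^ 4 - (t : ℂ) ^ 2 * ξ ^ 2 + 1 = 0)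
    (c0 c1 c2 c3 e0 e1 e2 e3 : ℤ)
    (h : ((c0:ℂ) + e0*(Complex.I * (Real.sqrt (d:ℝ) : ℂ)))
      + ((c1:ℂ) + e1*(Complex.I * (Real.sqrt (d:ℝ) : ℂ)))*ξ
      + ((c2:ℂ) + e2*(Complex.I * (Real.sqrt (d:ℝ) : ℂ)))*ξ^2
      + ((c3:ℂ) + e3*(Complex.I * (Real.sqrt (d:ℝ) : ℂ)))*ξ^3 = 0) :
    c0 = 0 ∧ c1 = 0 ∧ c2 = 0 ∧ c3 = 0 ∧ e0 = 0 ∧ e1 = 0 ∧ e2 = 0 ∧ e3 = 0 := by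
  set g : ℂ := Complex.I * (Real.sqrt (d:ℝ) : ℂ) with hgdef
  have hgM : g ∈ Mfield d := IntermediateField.subset_adjoin ℚ _ rfl
  set G : Mfield d := ⟨g, hgM⟩ with hGdef
  have hcoe : ∀ c e : ℤ, (((c : Mfield d) + (e : Mfield d) * G : Mfield d) : ℂ)
      = (c:ℂ) + (e:ℂ)*g := by
    intro c e
    push_cast
    rfl
  set v0 : Mfield d := (c0 : Mfield d) + (e0 : Mfield d) * G with hv0
  set v1 : Mfield d := (c1 : Mfield d) + (e1 : Mfield d) * G with hv1
  set v2 : Mfield d := (c2 : Mfield d) + (e2 : Mfield d) * G with hv2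
  set v3 : Mfield d := (c3 : Mfield d) + (e3 : Mfield d) * G with hv3
  set QQ : Polynomial (Mfield d) := C v0 + C v1 * X + C v2 * X^2 + C v3 * X^3 with hQQ
  -- the minimal polynomial of ξ over M
  have haev : (Polynomial.aeval ξ) (X ^ 4 - C (t ^ 2) * X ^ 2 + 1 : Polynomial (Mfield d)) = 0 := by
    simp only [map_add, map_sub, map_pow, map_mul, map_one, Polynomial.aeval_X,
      Polynomial.aeval_C]
    have halg : (algebraMap (Mfield d) ℂ) t = (t:ℂ) := rfl
    rw [halg]
    exact hξ
  have hmin : (X ^ 4 - C (t ^ 2) * X ^ 2 + 1 : Polynomial (Mfield d)) = minpoly (Mfield d) ξ :=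
    minpoly.eq_of_irreducible_of_monic hirr haev (quart_monic _)
  -- QQ kills ξ
  have haevQQ : (Polynomial.aeval ξ) QQ = 0 := by
    rw [hQQ]
    simp only [map_add, map_mul, map_pow, Polynomial.aeval_X, Polynomial.aeval_C]
    have e0' : (algebraMap (Mfield d) ℂ) v0 = (c0:ℂ) + (e0:ℂ)*g := hcoe c0 e0
    have e1' : (algebraMap (Mfield d) ℂ) v1 = (c1:ℂ) + (e1:ℂ)*g := hcoe c1 e1
    have e2' : (algebraMap (Mfield d) ℂ) v2 = (c2:ℂ) + (e2:ℂ)*g := hcoe c2 e2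
    have e3' : (algebraMap (Mfield d) ℂ) v3 = (c3:ℂ) + (e3:ℂ)*g := hcoe c3 e3
    rw [e0', e1', e2', e3']
    linear_combination h
  have hQQdeg : QQ.degree ≤ 3 := by
    rw [hQQ]
    refine le_trans (Polynomial.degree_add_le _ _) (max_le ?_ ?_)
    · refine le_trans (Polynomial.degree_add_le _ _) (max_le ?_ ?_)
      · refine le_trans (Polynomial.degree_add_le _ _) (max_le ?_ ?_)
        · exact le_trans Polynomial.degree_C_le (by decide)
        · refine le_trans (Polynomial.degree_mul_le _ _) ?_
          have h1 : (C v1).degree ≤ 0 := Polynomial.degree_C_le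
          have h2 : (X : Polynomial (Mfield d)).degree ≤ 1 := Polynomial.degree_X_le
          calc (C v1).degree + (X : Polynomial (Mfield d)).degree ≤ 0 + 1 := add_le_add h1 h2
          _ ≤ 3 := by decide
      · exact le_trans (Polynomial.degree_C_mul_X_pow_le 2 _) (by decide)
    · exact le_trans (Polynomial.degree_C_mul_X_pow_le 3 _) (by decide)
  have hQQ0 : QQ = 0 := by
    by_contra h'
    have hle := minpoly.degree_le_of_ne_zero (Mfield d) ξ h' haevQQ
    rw [← hmin, quart_deg] at hle
    exact absurd (le_trans hle hQQdeg) (by decide)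
  -- extract coefficients
  have hco : ∀ i : ℕ, QQ.coeff i = 0 := by rw [hQQ0]; simp
  have hc0 := hco 0
  have hc1 := hco 1
  have hc2 := hco 2
  have hc3 := hco 3
  rw [hQQ] at hc0 hc1 hc2 hc3
  simp [Polynomial.coeff_add, Polynomial.coeff_C, Polynomial.coeff_C_mul,
    Polynomial.coeff_X_pow, Polynomial.coeff_X] at hc0 hc1 hc2 hc3
  have z0 : (c0:ℂ) + (e0:ℂ)*g = 0 := by
    rw [← hcoe c0 e0, ← hv0, hc0]; rfl
  have z1 : (c1:ℂ) + (e1:ℂ)*g = 0 := by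
    rw [← hcoe c1 e1, ← hv1, hc1]; rfl
  have z2 : (c2:ℂ) + (e2:ℂ)*g = 0 := by
    rw [← hcoe c2 e2, ← hv2, hc2]; rfl
  have z3 : (c3:ℂ) + (e3:ℂ)*g = 0 := by
    rw [← hcoe c3 e3, ← hv3, hc3]; rfl
  obtain ⟨p0, q0⟩ := int_lin_indep hd c0 e0 z0
  obtain ⟨p1, q1⟩ := int_lin_indep hd c1 e1 z1
  obtain ⟨p2, q2⟩ := int_lin_indep hd c2 e2 z2
  obtain ⟨p3, q3⟩ := int_lin_indep hd c3 e3 z3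
  exact ⟨p0, p1, p2, p3, q0, q1, q2, q3⟩


set_option maxHeartbeats 1600000 in
/-- Let `d > 0` be squarefree with `−d ≡ 2, 3 (mod 4)`, `M = ℚ(i√d)`
with ring of integers `Z_M = ℤ[i√d]`, and `t ∈ Z_M` with `|t| > 245` such that
`x⁴ − t²x² + 1` is irreducible over `M`. If `ξ` is a root of this polynomial, then
the order `O = Z_M[ξ]` admits no power integral basis: no `α ∈ O` has `ℤ[α] = O`. -/
theorem stmt_10 (d : ℤ) (hd : 0 < d) (hsq : Squarefree d)
    (hmod : (-d) % 4 = 2 ∨ (-d) % 4 = 3)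
    (t : Mfield d)
    (htZM : (t : ℂ) ∈ Subring.closure {(Complex.I * (Real.sqrt (d : ℝ) : ℂ) : ℂ)})
    (htabs : 245 < ‖(t : ℂ)‖)
    (hirr : Irreducible (X ^ 4 - C (t ^ 2) * X ^ 2 + 1 : Polynomial (Mfield d)))
    (ξ : ℂ) (hξ : ξ ^ 4 - (t : ℂ) ^ 2 * ξ ^ 2 + 1 = 0) :
    ¬ ∃ α ∈ Subring.closure {(Complex.I * (Real.sqrt (d : ℝ) : ℂ) : ℂ), ξ},
        Subring.closure {α} =
          Subring.closure {(Complex.I * (Real.sqrt (d : ℝ) : ℂ) : ℂ), ξ} := by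
  intro hex
  obtain ⟨α, hαmem, hgen⟩ := hex
  set g : ℂ := Complex.I * (Real.sqrt (d:ℝ) : ℂ) with hgdef
  have hdnn : (0:ℝ) ≤ (d:ℝ) := by exact_mod_cast hd.le
  have hg2 : g^2 = -(d:ℂ) := by
    calc g^2 = Complex.I^2 * ((Real.sqrt (d:ℝ) : ℝ):ℂ)^2 := by rw [hgdef]; ring
    _ = -((((Real.sqrt (d:ℝ))^2 : ℝ)) : ℂ) := by
        rw [Complex.I_sq, Complex.ofReal_pow]; ring
    _ = -(d:ℂ) := by rw [Real.sq_sqrt hdnn]; push_cast; ring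
  obtain ⟨a, b, ht⟩ := mem_closure_g hg2 htZM
  have hξ' : ξ^4 - ((a:ℂ) + b*g)^2*ξ^2 + 1 = 0 := by rw [← ht]; exact hξ
  obtain ⟨ep, hep⟩ := ep_exists d
  obtain ⟨lam, hlam⟩ := lam_exists (a^2 - b^2*d)
  have hind : ∀ c0 c1 c2 c3 e0 e1 e2 e3 : ℤ,
      ((c0:ℂ) + e0*g) + ((c1:ℂ) + e1*g)*ξ + ((c2:ℂ) + e2*g)*ξ^2 + ((c3:ℂ) + e3*g)*ξ^3 = 0 →
      c0 = 0 ∧ c1 = 0 ∧ c2 = 0 ∧ c3 = 0 ∧ e0 = 0 ∧ e1 = 0 ∧ e2 = 0 ∧ e3 = 0 :=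
    fun c0 c1 c2 c3 e0 e1 e2 e3 h =>
      indep_of_irr d hd t hirr ξ hξ c0 c1 c2 c3 e0 e1 e2 e3 h
  have hker := ker_transfer d a b g ξ hg2 hξ' hind lam ep hlam hep
  obtain ⟨A, hA⟩ := RingHom.mem_range.mp (closure_pair_le_range g ξ hαmem)
  have hgmem : g ∈ Subring.closure {α} := by
    rw [hgen]; exact Subring.subset_closure (Set.mem_insert _ _)
  have hξmem : ξ ∈ Subring.closure {α} := by
    rw [hgen]; exact Subring.subset_closure (Set.mem_insert_of_mem _ rfl)
  obtain ⟨Pg, hPg⟩ := RingHom.mem_range.mp (closure_singleton_le_range α hgmem)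
  obtain ⟨Pξ, hPξ⟩ := RingHom.mem_range.mp (closure_singleton_le_range α hξmem)
  set q : BB := ψB ep lam A with hq
  have hYexp : YB ep = Pg.eval₂ (Int.castRingHom BB) q := by
    have h0 : evC g ξ (C X - Pg.eval₂ (Int.castRingHom (Polynomial (Polynomial ℤ))) A) = 0 := by
      rw [map_sub]
      have e1 : evC g ξ (C X) = g := by
        simp [evC, ev2, coe_eval₂RingHom]
      rw [e1, hom_eval₂_int (evC g ξ) Pg A, hA]
      rw [show Pg.eval₂ (Int.castRingHom ℂ) α = g from hPg]
      ring
    have h1 := hker _ h0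
    rw [map_sub, sub_eq_zero] at h1
    have e2 : ψB ep lam (C X) = YB ep := by
      simp [ψB, ψ2, coe_eval₂RingHom]
    rw [e2] at h1
    rw [h1, hom_eval₂_int (ψB ep lam) Pg A]
  have hXexp : XB lam = Pξ.eval₂ (Int.castRingHom BB) q := by
    have h0 : evC g ξ (X - Pξ.eval₂ (Int.castRingHom (Polynomial (Polynomial ℤ))) A) = 0 := by
      rw [map_sub]
      have e1 : evC g ξ (X : Polynomial (Polynomial ℤ)) = ξ := by
        simp [evC, coe_eval₂RingHom]
      rw [e1, hom_eval₂_int (evC g ξ) Pξ A, hA]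
      rw [show Pξ.eval₂ (Int.castRingHom ℂ) α = ξ from hPξ]
      ring
    have h1 := hker _ h0
    rw [map_sub, sub_eq_zero] at h1
    have e2 : ψB ep lam (X : Polynomial (Polynomial ℤ)) = XB lam := by
      simp [ψB, coe_eval₂RingHom]
    rw [e2] at h1
    rw [h1, hom_eval₂_int (ψB ep lam) Pξ A]
  exact final_contra q lam ep (hXexp ▸ eval_mem_TT q Pξ) (hYexp ▸ eval_mem_TT q Pg)
end PIB10
end

section
/- Let d > 0 be a squarefree integer with −d ≡ 2 or 3 (mod 4), and set M = Q(i√d) with ring of integers Z_M = Z[i√d]. Let t ∈ Z_M be a parameter with |t| > 1544803 such that the polynomial x⁴ − 4tx³ + (6t + 2)x² + 4tx + 1 is irreducible over M, let ξ be a root of this polynomial, and let O = Z_M[ξ] be the order generated by ξ over Z_M in the octic field K = M(ξ). Then O admits no power integral basis: there is no element α ∈ O with Z[α] = O. -/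
open Polynomial

section Helpers

-- representation of elements of ℤ[ω]
lemma closure_single_repr (d : ℤ) (ω : ℂ) (hω2 : ω * ω = -(d:ℂ)) {x : ℂ}
    (hx : x ∈ Subring.closure {ω}) : ∃ p q : ℤ, x = (p:ℂ) + (q:ℂ) * ω := by
  induction hx using Subring.closure_induction with
  | mem y hy => exact ⟨0, 1, by simp [Set.mem_singleton_iff.mp hy]⟩
  | zero => exact ⟨0, 0, by simp⟩
  | one => exact ⟨1, 0, by simp⟩
  | add x y hx hy ihx ihy =>
    obtain ⟨p, q, hx'⟩ := ihx; obtain ⟨r, s, hy'⟩ := ihy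
    exact ⟨p + r, q + s, by rw [hx', hy']; push_cast; ring⟩
  | neg x hx ihx =>
    obtain ⟨p, q, hx'⟩ := ihx
    exact ⟨-p, -q, by rw [hx']; push_cast; ring⟩
  | mul x y hx hy ihx ihy =>
    obtain ⟨p, q, hx'⟩ := ihx; obtain ⟨r, s, hy'⟩ := ihy
    refine ⟨p * r - q * s * d, p * s + q * r, ?_⟩
    rw [hx', hy']; push_cast; linear_combination (q:ℂ) * (s:ℂ) * hω2

-- elements of ℤ[α] are ℤ-combinations of powers of α
lemma closure_singleton_powers (α : ℂ) {x : ℂ} (hx : x ∈ Subring.closure {α}) :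
    x ∈ Submodule.span ℤ (Set.range fun n : ℕ => α ^ n) := by
  induction hx using Subring.closure_induction with
  | mem y hy =>
    have h1 : α ∈ Set.range fun n : ℕ => α ^ n := ⟨1, pow_one α⟩
    rw [Set.mem_singleton_iff.mp hy]
    exact Submodule.subset_span h1
  | zero => exact zero_mem _
  | one => exact Submodule.subset_span ⟨0, by simp⟩
  | add x y hx hy ihx ihy => exact add_mem ihx ihy
  | neg x hx ihx => exact neg_mem ihx
  | mul x y hx hy ihx ihy =>
    clear hx hy
    induction ihy using Submodule.span_induction with
    | mem z hz =>
      obtain ⟨n, rfl⟩ := hz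
      induction ihx using Submodule.span_induction with
      | mem z' hz' =>
        obtain ⟨m, rfl⟩ := hz'
        rw [← pow_add]
        exact Submodule.subset_span ⟨m + n, rfl⟩
      | zero => rw [zero_mul]; exact zero_mem _
      | add a b ha hb iha ihb => rw [add_mul]; exact add_mem iha ihb
      | smul n a ha iha => rw [smul_mul_assoc]; exact Submodule.smul_mem _ _ iha
    | zero => rw [mul_zero]; exact zero_mem _
    | add a b ha hb iha ihb => rw [mul_add]; exact add_mem iha ihb
    | smul n a ha iha => rw [mul_smul_comm]; exact Submodule.smul_mem _ _ iha

-- every element of ℤ[ω,ξ] is an integer plus an element of the "ideal" (2, ξ-1, ω-d)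
lemma closure_pair_int_plus_J (d e : ℤ) (he : 2 * e = d * d - d) (ω ξ : ℂ)
    (hω2 : ω * ω = -(d:ℂ)) {x : ℂ}
    (hx : x ∈ Subring.closure {ω, ξ}) :
    ∃ c : ℤ, ∃ s1 s2 s3 : ℂ, s1 ∈ Subring.closure {ω, ξ} ∧ s2 ∈ Subring.closure {ω, ξ} ∧
      s3 ∈ Subring.closure {ω, ξ} ∧
      x - (c:ℂ) = 2 * s1 + (ξ - 1) * s2 + (ω - (d:ℂ)) * s3 := by
  set S := Subring.closure {ω, ξ} with hS
  have hωS : ω ∈ S := Subring.subset_closure (by left; rfl)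
  have hξS : ξ ∈ S := Subring.subset_closure (by right; rfl)
  have he' : (2:ℂ) * (e:ℂ) = (d:ℂ) * (d:ℂ) - (d:ℂ) := by exact_mod_cast he
  have hw2 : (ω - (d:ℂ)) * (ω - (d:ℂ)) = 2 * ((e:ℂ) - (d:ℂ) * ω) := by
    linear_combination hω2 - he'
  induction hx using Subring.closure_induction with
  | mem y hy =>
    rcases hy with hy | hy
    · exact ⟨d, 0, 0, 1, zero_mem _, zero_mem _, one_mem _, by rw [hy]; ring⟩
    · exact ⟨1, 0, 1, 0, zero_mem _, one_mem _, zero_mem _,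
        by rw [Set.mem_singleton_iff.mp hy]; ring⟩
  | zero => exact ⟨0, 0, 0, 0, zero_mem _, zero_mem _, zero_mem _, by ring⟩
  | one => exact ⟨1, 0, 0, 0, zero_mem _, zero_mem _, zero_mem _, by ring⟩
  | add x y hx hy ihx ihy =>
    obtain ⟨c, s1, s2, s3, h1, h2, h3, hx'⟩ := ihx
    obtain ⟨c', r1, r2, r3, g1, g2, g3, hy'⟩ := ihy
    exact ⟨c + c', s1 + r1, s2 + r2, s3 + r3, add_mem h1 g1, add_mem h2 g2, add_mem h3 g3,
      by push_cast; linear_combination hx' + hy'⟩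
  | neg x hx ihx =>
    obtain ⟨c, s1, s2, s3, h1, h2, h3, hx'⟩ := ihx
    exact ⟨-c, -s1, -s2, -s3, neg_mem h1, neg_mem h2, neg_mem h3,
      by push_cast; linear_combination -hx'⟩
  | mul x y hx hy ihx ihy =>
    obtain ⟨c, s1, s2, s3, h1, h2, h3, hx'⟩ := ihx
    obtain ⟨c', r1, r2, r3, g1, g2, g3, hy'⟩ := ihy
    refine ⟨c * c',
      (c:ℂ) * r1 + (c':ℂ) * s1 + 2 * s1 * r1 + (ξ-1) * s2 * r1 + (ω - (d:ℂ)) * s3 * r1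
        + (ξ-1) * s1 * r2 + (ω - (d:ℂ)) * s1 * r3 + ((e:ℂ) - (d:ℂ) * ω) * s3 * r3,
      (c:ℂ) * r2 + (c':ℂ) * s2 + (ξ-1) * s2 * r2 + (ω - (d:ℂ)) * s3 * r2
        + (ω - (d:ℂ)) * s2 * r3,
      (c:ℂ) * r3 + (c':ℂ) * s3, ?_, ?_, ?_, ?_⟩
    · have hdS : ((d:ℤ):ℂ) ∈ S := intCast_mem S d
      have heS : ((e:ℤ):ℂ) ∈ S := intCast_mem S e
      have hcS : ((c:ℤ):ℂ) ∈ S := intCast_mem S c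
      have hc'S : ((c':ℤ):ℂ) ∈ S := intCast_mem S c'
      have huS : ξ - 1 ∈ S := sub_mem hξS (one_mem _)
      have hwS : ω - (d:ℂ) ∈ S := sub_mem hωS hdS
      have h2S : (2:ℂ) ∈ S := by exact_mod_cast natCast_mem S 2
      exact add_mem (add_mem (add_mem (add_mem (add_mem (add_mem (add_mem
        (mul_mem hcS g1) (mul_mem hc'S h1)) (mul_mem (mul_mem h2S h1) g1))
        (mul_mem (mul_mem huS h2) g1)) (mul_mem (mul_mem hwS h3) g1))
        (mul_mem (mul_mem huS h1) g2)) (mul_mem (mul_mem hwS h1) g3))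
        (mul_mem (mul_mem (sub_mem heS (mul_mem hdS hωS)) h3) g3)
    · have hdS : ((d:ℤ):ℂ) ∈ S := intCast_mem S d
      have hcS : ((c:ℤ):ℂ) ∈ S := intCast_mem S c
      have hc'S : ((c':ℤ):ℂ) ∈ S := intCast_mem S c'
      have huS : ξ - 1 ∈ S := sub_mem hξS (one_mem _)
      have hwS : ω - (d:ℂ) ∈ S := sub_mem hωS hdS
      exact add_mem (add_mem (add_mem (add_mem
        (mul_mem hcS g2) (mul_mem hc'S h2)) (mul_mem (mul_mem huS h2) g2))
        (mul_mem (mul_mem hwS h3) g2)) (mul_mem (mul_mem hwS h2) g3)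
    · have hcS : ((c:ℤ):ℂ) ∈ S := intCast_mem S c
      have hc'S : ((c':ℤ):ℂ) ∈ S := intCast_mem S c'
      exact add_mem (mul_mem hcS g3) (mul_mem hc'S h3)
    · push_cast
      linear_combination ((c':ℂ) + 2 * r1 + (ξ-1) * r2 + (ω - (d:ℂ)) * r3) * hx'
        + (x : ℂ) * hy' + 2 * s3 * r3 * hw2 - r3 * s3 * hω2 + r3 * s3 * he'

end Helpers


set_option maxHeartbeats 1000000 in
set_option synthInstance.maxHeartbeats 400000 in
lemma indep_aux (d : ℤ) (hd : 0 < d) (t : Mfield d)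
    (hirr : Irreducible (X ^ 4 - C (4 * t) * X ^ 3 + C (6 * t + 2) * X ^ 2
      + C (4 * t) * X + 1 : Polynomial (Mfield d)))
    (ξ : ℂ) (hξ : ξ ^ 4 - 4 * (t : ℂ) * ξ ^ 3 + (6 * (t : ℂ) + 2) * ξ ^ 2
      + 4 * (t : ℂ) * ξ + 1 = 0) :
    LinearIndependent ℤ (fun k : Fin 4 × Fin 2 =>
      ξ ^ (k.1 : ℕ) * (Complex.I * (Real.sqrt (d : ℝ) : ℂ)) ^ (k.2 : ℕ)) := by
  set ω : ℂ := Complex.I * (Real.sqrt (d : ℝ) : ℂ) with hωdef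
  have hωmem : ω ∈ Mfield d := IntermediateField.subset_adjoin ℚ _ (Set.mem_singleton _)
  set ωM : Mfield d := ⟨ω, hωmem⟩ with hωM
  set P4 : Polynomial (Mfield d) := X ^ 4 - C (4 * t) * X ^ 3 + C (6 * t + 2) * X ^ 2
      + C (4 * t) * X + 1 with hP4
  have hmonic : P4.Monic := by rw [hP4]; monicity!
  have haeval : aeval ξ P4 = 0 := by
    rw [hP4]
    simp only [map_add, map_sub, map_mul, map_pow, map_one, map_ofNat, aeval_X, aeval_C,
      IntermediateField.algebraMap_apply]
    push_cast
    linear_combination hξ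
  have hmin : minpoly (Mfield d) ξ = P4 :=
    (minpoly.eq_of_irreducible_of_monic hirr haeval hmonic).symm
  have hdeg : (minpoly (Mfield d) ξ).degree = 4 := by
    rw [hmin, hP4]; compute_degree!
  rw [Fintype.linearIndependent_iff]
  intro g hg
  set c : Fin 4 → Mfield d := fun i => (g (i, 0) : Mfield d) + (g (i, 1) : Mfield d) * ωM with hc
  set P : Polynomial (Mfield d) :=
    C (c 0) + C (c 1) * X + C (c 2) * X ^ 2 + C (c 3) * X ^ 3 with hPdef
  have haevalP : aeval ξ P = 0 := by
    rw [hPdef]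
    simp only [map_add, map_mul, map_pow, map_ofNat, aeval_X, aeval_C,
      IntermediateField.algebraMap_apply]
    have hcc : ∀ i : Fin 4, ((c i : ℂ)) = (g (i,0) : ℂ) + (g (i,1) : ℂ) * ω := by
      intro i; rw [hc]; push_cast; rfl
    rw [hcc 0, hcc 1, hcc 2, hcc 3]
    have := hg
    rw [Fintype.sum_prod_type] at this
    simp only [Fin.sum_univ_four, Fin.sum_univ_two, zsmul_eq_mul] at this
    simp only [Fin.isValue, Fin.val_zero, Fin.val_one, Fin.val_two,
      show ((3:Fin 4):ℕ) = 3 from rfl, pow_zero, pow_one] at this ⊢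
    linear_combination this
  have hPzero : P = 0 := by
    by_contra hne
    have h1 : (minpoly (Mfield d) ξ).degree ≤ P.degree :=
      minpoly.degree_le_of_ne_zero (Mfield d) ξ hne haevalP
    have h2 : P.degree ≤ 3 := by rw [hPdef]; compute_degree
    rw [hdeg] at h1
    have := h1.trans h2
    norm_num at this
  have hcoeff : ∀ i : Fin 4, c i = 0 := by
    intro i
    have h0 : P.coeff 0 = c 0 := by rw [hPdef]; simp [coeff_add, coeff_C, coeff_X_pow, coeff_C_mul]
    have h1 : P.coeff 1 = c 1 := by rw [hPdef]; simp [coeff_add, coeff_C, coeff_X_pow, coeff_C_mul]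
    have h2 : P.coeff 2 = c 2 := by rw [hPdef]; simp [coeff_add, coeff_C, coeff_X_pow, coeff_C_mul]
    have h3 : P.coeff 3 = c 3 := by rw [hPdef]; simp [coeff_add, coeff_C, coeff_X_pow, coeff_C_mul]
    have e0 : c 0 = 0 := by rw [← h0, hPzero]; simp
    have e1 : c 1 = 0 := by rw [← h1, hPzero]; simp
    have e2 : c 2 = 0 := by rw [← h2, hPzero]; simp
    have e3 : c 3 = 0 := by rw [← h3, hPzero]; simp
    fin_cases i
    · exact e0
    · exact e1
    · exact e2
    · exact e3
  have hsqrt : Real.sqrt (d:ℝ) ≠ 0 := by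
    have : (0:ℝ) < Real.sqrt (d:ℝ) := Real.sqrt_pos.mpr (by exact_mod_cast hd)
    linarith
  intro k
  obtain ⟨i, j⟩ := k
  have hci := hcoeff i
  have hC : (g (i,0) : ℂ) + (g (i,1) : ℂ) * ω = 0 := by
    have : ((c i : ℂ)) = 0 := by rw [hci]; simp
    rw [hc] at this; push_cast at this; convert this using 2 <;> rfl
  have hre : ((g (i,0) : ℝ)) = 0 := by
    have h := congrArg Complex.re hC
    rw [hωdef] at h
    simpa [Complex.add_re, Complex.mul_re, Complex.mul_im] using h
  have him : ((g (i,1) : ℝ)) * Real.sqrt (d:ℝ) = 0 := by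
    have h := congrArg Complex.im hC
    rw [hωdef] at h
    simpa [Complex.add_im, Complex.mul_re, Complex.mul_im] using h
  have hg0 : g (i, 0) = 0 := by exact_mod_cast hre
  have hg1 : g (i, 1) = 0 := by
    rcases mul_eq_zero.mp him with h | h
    · exact_mod_cast h
    · exact absurd h hsqrt
  fin_cases j
  · exact hg0
  · exact hg1

set_option maxHeartbeats 2000000 in
/-- Let `d > 0` be squarefree with `−d ≡ 2, 3 (mod 4)`, `M = ℚ(i√d)`
with ring of integers `Z_M = ℤ[i√d]`, and `t ∈ Z_M` with `|t| > 1544803` such that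
`x⁴ − 4tx³ + (6t + 2)x² + 4tx + 1` is irreducible over `M`. If `ξ` is a root of this
polynomial, then the order `O = Z_M[ξ]` admits no power integral basis: no `α ∈ O`
has `ℤ[α] = O`. -/
theorem stmt_11 (d : ℤ) (hd : 0 < d) (hsq : Squarefree d)
    (hmod : (-d) % 4 = 2 ∨ (-d) % 4 = 3)
    (t : Mfield d)
    (htZM : (t : ℂ) ∈ Subring.closure {(Complex.I * (Real.sqrt (d : ℝ) : ℂ) : ℂ)})
    (htabs : 1544803 < ‖(t : ℂ)‖)
    (hirr : Irreducible (X ^ 4 - C (4 * t) * X ^ 3 + C (6 * t + 2) * X ^ 2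
      + C (4 * t) * X + 1 : Polynomial (Mfield d)))
    (ξ : ℂ) (hξ : ξ ^ 4 - 4 * (t : ℂ) * ξ ^ 3 + (6 * (t : ℂ) + 2) * ξ ^ 2
      + 4 * (t : ℂ) * ξ + 1 = 0) :
    ¬ ∃ α ∈ Subring.closure {(Complex.I * (Real.sqrt (d : ℝ) : ℂ) : ℂ), ξ},
        Subring.closure {α} =
          Subring.closure {(Complex.I * (Real.sqrt (d : ℝ) : ℂ) : ℂ), ξ} := by
  rintro ⟨α, hαS, hZα⟩
  -- make ω opaque
  obtain ⟨ω, hωdef⟩ : ∃ w : ℂ, w = Complex.I * (Real.sqrt (d : ℝ) : ℂ) := ⟨_, rfl⟩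
  rw [← hωdef] at htZM hαS hZα
  set S := Subring.closure {ω, ξ} with hSdef
  have hω2 : ω * ω = -(d:ℂ) := by
    rw [hωdef]
    have h : (Real.sqrt (d:ℝ)) ^ 2 = (d:ℝ) := Real.sq_sqrt (by positivity)
    have h2 : ((Real.sqrt (d:ℝ) : ℂ)) ^ 2 = ((d:ℝ):ℂ) := by rw [← Complex.ofReal_pow, h]
    push_cast at h2 ⊢
    linear_combination Complex.I ^ 2 * h2 + (d:ℂ) * Complex.I_sq
  obtain ⟨p, q, ht⟩ := closure_single_repr d ω hω2 htZM
  have hξ4 : ξ^4 = 4*(t:ℂ)*ξ^3 - (6*(t:ℂ)+2)*ξ^2 - 4*(t:ℂ)*ξ - 1 := by linear_combination hξ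
  -- the ℤ-module spanned by the 8 monomials
  obtain ⟨b, hb⟩ : ∃ f : Fin 4 × Fin 2 → ℂ, f = fun k => ξ ^ (k.1 : ℕ) * ω ^ (k.2 : ℕ) :=
    ⟨_, rfl⟩
  set M0 : Submodule ℤ ℂ := Submodule.span ℤ (Set.range b) with hM0def
  have hbmem : ∀ k, b k ∈ M0 := fun k => Submodule.subset_span (Set.mem_range_self k)
  have hL1 : ∀ x ∈ M0, ω * x ∈ M0 := by
    intro x hx
    induction hx using Submodule.span_induction with
    | mem y hy =>
      obtain ⟨⟨i, j⟩, rfl⟩ := hy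
      fin_cases j
      · show ω * b (i, 0) ∈ M0
        have h : ω * b (i, 0) = b (i, 1) := by
          simp only [hb, Fin.val_zero, Fin.val_one, pow_zero, pow_one]; ring
        rw [h]; exact hbmem _
      · show ω * b (i, 1) ∈ M0
        have h : ω * b (i, 1) = (-d : ℤ) • b (i, 0) := by
          simp only [hb, Fin.val_zero, Fin.val_one, pow_zero, pow_one, zsmul_eq_mul]
          push_cast
          linear_combination ξ ^ (i:ℕ) * hω2
        rw [h]; exact Submodule.smul_mem _ _ (hbmem _)
    | zero => rw [mul_zero]; exact zero_mem _
    | add x y hx hy ihx ihy => rw [mul_add]; exact add_mem ihx ihy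
    | smul a x hx ihx => rw [mul_smul_comm]; exact Submodule.smul_mem _ _ ihx
  have hξ4mem : ξ ^ 4 ∈ M0 := by
    have h : ξ ^ 4 = (4*p) • b (3, 0) + (4*q) • b (3, 1) + (-(6*p+2)) • b (2, 0)
        + (-(6*q)) • b (2, 1) + (-(4*p)) • b (1, 0) + (-(4*q)) • b (1, 1)
        + (-1 : ℤ) • b (0, 0) := by
      simp only [hb, zsmul_eq_mul]
      simp only [Fin.isValue, Fin.val_zero, Fin.val_one, Fin.val_two,
        show ((3:Fin 4):ℕ) = 3 from rfl, show ((1:Fin 2):ℕ) = 1 from rfl, pow_zero, pow_one]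
      push_cast
      linear_combination hξ4 + (4*ξ^3 - 6*ξ^2 - 4*ξ) * ht
    rw [h]
    exact add_mem (add_mem (add_mem (add_mem (add_mem (add_mem
      (Submodule.smul_mem _ _ (hbmem _)) (Submodule.smul_mem _ _ (hbmem _)))
      (Submodule.smul_mem _ _ (hbmem _))) (Submodule.smul_mem _ _ (hbmem _)))
      (Submodule.smul_mem _ _ (hbmem _))) (Submodule.smul_mem _ _ (hbmem _)))
      (Submodule.smul_mem _ _ (hbmem _))
  have hL2 : ∀ x ∈ M0, ξ * x ∈ M0 := by
    intro x hx
    induction hx using Submodule.span_induction with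
    | mem y hy =>
      obtain ⟨⟨i, j⟩, rfl⟩ := hy
      fin_cases i
      · show ξ * b (0, j) ∈ M0
        have h : ξ * b (0, j) = b (1, j) := by
          simp only [hb, Fin.val_zero, Fin.val_one, pow_zero, pow_one]; ring
        rw [h]; exact hbmem _
      · show ξ * b (1, j) ∈ M0
        have h : ξ * b (1, j) = b (2, j) := by
          simp only [hb, Fin.val_one, Fin.val_two, pow_one]; ring
        rw [h]; exact hbmem _
      · show ξ * b (2, j) ∈ M0
        have h : ξ * b (2, j) = b (3, j) := by
          simp only [hb, Fin.val_two, show ((3:Fin 4):ℕ) = 3 from rfl]; ring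
        rw [h]; exact hbmem _
      · fin_cases j
        · show ξ * b (3, 0) ∈ M0
          have h : ξ * b (3, 0) = ξ ^ 4 := by
            simp only [hb, Fin.val_zero, show ((3:Fin 4):ℕ) = 3 from rfl, pow_zero]; ring
          rw [h]; exact hξ4mem
        · show ξ * b (3, 1) ∈ M0
          have h : ξ * b (3, 1) = ω * ξ ^ 4 := by
            simp only [hb, Fin.val_one, show ((3:Fin 4):ℕ) = 3 from rfl, pow_one]; ring
          rw [h]; exact hL1 _ hξ4mem
    | zero => rw [mul_zero]; exact zero_mem _
    | add x y hx hy ihx ihy => rw [mul_add]; exact add_mem ihx ihy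
    | smul a x hx ihx => rw [mul_smul_comm]; exact Submodule.smul_mem _ _ ihx
  have hmul : ∀ x ∈ M0, ∀ y ∈ M0, x * y ∈ M0 := by
    intro x hx y hy
    induction hy using Submodule.span_induction with
    | mem z hz =>
      obtain ⟨⟨i, j⟩, rfl⟩ := hz
      fin_cases i <;> fin_cases j
      · show x * b (0, 0) ∈ M0
        have h : x * b (0, 0) = x := by
          simp only [hb, Fin.val_zero, pow_zero]; ring
        rw [h]; exact hx
      · show x * b (0, 1) ∈ M0
        have h : x * b (0, 1) = ω * x := by
          simp only [hb, Fin.val_zero, Fin.val_one, pow_zero, pow_one]; ring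
        rw [h]; exact hL1 _ hx
      · show x * b (1, 0) ∈ M0
        have h : x * b (1, 0) = ξ * x := by
          simp only [hb, Fin.val_zero, Fin.val_one, pow_zero, pow_one]; ring
        rw [h]; exact hL2 _ hx
      · show x * b (1, 1) ∈ M0
        have h : x * b (1, 1) = ω * (ξ * x) := by
          simp only [hb, Fin.val_one, pow_one]; ring
        rw [h]; exact hL1 _ (hL2 _ hx)
      · show x * b (2, 0) ∈ M0
        have h : x * b (2, 0) = ξ * (ξ * x) := by
          simp only [hb, Fin.val_zero, Fin.val_two, pow_zero]; ring
        rw [h]; exact hL2 _ (hL2 _ hx)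
      · show x * b (2, 1) ∈ M0
        have h : x * b (2, 1) = ω * (ξ * (ξ * x)) := by
          simp only [hb, Fin.val_one, Fin.val_two, pow_one]; ring
        rw [h]; exact hL1 _ (hL2 _ (hL2 _ hx))
      · show x * b (3, 0) ∈ M0
        have h : x * b (3, 0) = ξ * (ξ * (ξ * x)) := by
          simp only [hb, Fin.val_zero, show ((3:Fin 4):ℕ) = 3 from rfl, pow_zero]; ring
        rw [h]; exact hL2 _ (hL2 _ (hL2 _ hx))
      · show x * b (3, 1) ∈ M0
        have h : x * b (3, 1) = ω * (ξ * (ξ * (ξ * x))) := by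
          simp only [hb, Fin.val_one, show ((3:Fin 4):ℕ) = 3 from rfl, pow_one]; ring
        rw [h]; exact hL1 _ (hL2 _ (hL2 _ (hL2 _ hx)))
    | zero => rw [mul_zero]; exact zero_mem _
    | add y z hy hz ihy ihz => rw [mul_add]; exact add_mem ihy ihz
    | smul a z hz ihz => rw [mul_smul_comm]; exact Submodule.smul_mem _ _ ihz
  have hωS : ω ∈ S := Subring.subset_closure (by left; rfl)
  have hξS : ξ ∈ S := Subring.subset_closure (by right; rfl)
  have hSM0 : ∀ x ∈ S, x ∈ M0 := by
    intro x hx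
    induction hx using Subring.closure_induction with
    | mem y hy =>
      rcases hy with hy | hy
      · have h : y = b (0, 1) := by
          rw [hy]; simp only [hb, Fin.val_zero, Fin.val_one, pow_zero, pow_one]; ring
        rw [h]; exact hbmem _
      · have h : y = b (1, 0) := by
          rw [Set.mem_singleton_iff.mp hy]
          simp only [hb, Fin.val_zero, Fin.val_one, pow_zero, pow_one]; ring
        rw [h]; exact hbmem _
    | zero => exact zero_mem _
    | one =>
      have h : (1:ℂ) = b (0, 0) := by simp only [hb, Fin.val_zero, pow_zero]; ring
      rw [h]; exact hbmem _
    | add x y hx hy ihx ihy => exact add_mem ihx ihy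
    | neg x hx ihx => exact neg_mem ihx
    | mul x y hx hy ihx ihy => exact hmul _ ihx _ ihy
  have hM0S : ∀ x ∈ M0, x ∈ S := by
    intro x hx
    induction hx using Submodule.span_induction with
    | mem y hy =>
      obtain ⟨⟨i, j⟩, rfl⟩ := hy
      have h : b (i, j) = ξ ^ (i:ℕ) * ω ^ (j:ℕ) := by rw [hb]
      rw [h]
      exact mul_mem (pow_mem hξS _) (pow_mem hωS _)
    | zero => exact zero_mem _
    | add x y hx hy ihx ihy => exact add_mem ihx ihy
    | smul a x hx ihx => exact zsmul_mem ihx _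
  -- decomposition of α
  obtain ⟨e, he⟩ : ∃ e : ℤ, 2 * e = d * d - d := by
    obtain ⟨m, hm⟩ := Int.even_mul_succ_self (d - 1)
    exact ⟨m, by linarith⟩
  obtain ⟨c, s1, s2, s3, hs1, hs2, hs3, hdecomp⟩ :=
    closure_pair_int_plus_J d e he ω ξ hω2 hαS
  have hβS : α - (c:ℂ) ∈ S := sub_mem hαS (intCast_mem S c)
  -- elements of the subring S as a ring
  set u : ℂ := ξ - 1 with hu
  set w : ℂ := ω - (d:ℂ) with hwdef
  have huS : u ∈ S := sub_mem hξS (one_mem _)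
  have hwS : w ∈ S := sub_mem hωS (intCast_mem S d)
  set v1 : ℂ := ((2*p-2:ℤ):ℂ)*ξ^3 + ((2*q:ℤ):ℂ)*(ω*ξ^3) + ((2-3*p:ℤ):ℂ)*ξ^2
    + ((-3*q:ℤ):ℂ)*(ω*ξ^2) + ((-(2*p)-2:ℤ):ℂ)*ξ + ((-(2*q):ℤ):ℂ)*(ω*ξ) with hv1
  have hv1S : v1 ∈ S := by
    refine add_mem (add_mem (add_mem (add_mem (add_mem ?_ ?_) ?_) ?_) ?_) ?_
    · exact mul_mem (intCast_mem S _) (pow_mem hξS 3)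
    · exact mul_mem (intCast_mem S _) (mul_mem hωS (pow_mem hξS 3))
    · exact mul_mem (intCast_mem S _) (pow_mem hξS 2)
    · exact mul_mem (intCast_mem S _) (mul_mem hωS (pow_mem hξS 2))
    · exact mul_mem (intCast_mem S _) hξS
    · exact mul_mem (intCast_mem S _) (mul_mem hωS hξS)
  have hu4 : u^4 = 2 * v1 := by
    rw [hu, hv1]
    push_cast
    linear_combination hξ4 + (4*ξ^3 - 6*ξ^2 - 4*ξ) * ht
  set w1 : ℂ := (e:ℂ) - (d:ℂ)*ω with hw1
  have hw1S : w1 ∈ S := sub_mem (intCast_mem S e) (mul_mem (intCast_mem S d) hωS)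
  have hw2sq : w^2 = 2 * w1 := by
    rw [hwdef, hw1]
    have he' : (2:ℂ) * (e:ℂ) = (d:ℂ) * (d:ℂ) - (d:ℂ) := by exact_mod_cast he
    linear_combination hω2 - he'
  -- move into the subring S
  set β : ℂ := α - (c:ℂ) with hβdef
  let S1 : ↥S := ⟨s1, hs1⟩
  let S2 : ↥S := ⟨s2, hs2⟩
  let S3 : ↥S := ⟨s3, hs3⟩
  let U : ↥S := ⟨u, huS⟩
  let W : ↥S := ⟨w, hwS⟩
  let V1 : ↥S := ⟨v1, hv1S⟩
  let W1 : ↥S := ⟨w1, hw1S⟩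
  let B : ↥S := ⟨β, hβS⟩
  have hU4 : U^4 = 2 * V1 := by
    apply Subtype.ext; push_cast; exact hu4
  have hW2 : W^2 = 2 * W1 := by
    apply Subtype.ext; push_cast; exact hw2sq
  have hBdec : B = 2 * S1 + U * S2 + W * S3 := by
    apply Subtype.ext; push_cast; exact hdecomp
  -- quintic: B^5 = 2 * E
  set E : ↥S :=
      (16*S1^5 + 40*S1^4*(W*S3) + 40*S1^3*(W*S3)^2 + 20*S1^2*(W*S3)^3 + 5*S1*(W*S3)^4
      + 40*S1^4*(U*S2) + 80*S1^3*(U*S2)*(W*S3) + 60*S1^2*(U*S2)*(W*S3)^2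
      + 20*S1*(U*S2)*(W*S3)^3 + 40*S1^3*(U*S2)^2 + 60*S1^2*(U*S2)^2*(W*S3)
      + 30*S1*(U*S2)^2*(W*S3)^2 + 20*S1^2*(U*S2)^3 + 20*S1*(U*S2)^3*(W*S3) + 5*S1*(U*S2)^4)
      + V1*(S2^4*(U*S2 + 5*(W*S3)))
      + W1*(S3^2*(10*(U*S2)^3 + 10*(U*S2)^2*(W*S3) + 5*(U*S2)*(W*S3)^2 + (W*S3)^3))
    with hE
  have hB5 : B^5 = 2 * E := by
    rw [hBdec, hE]
    linear_combination (S2^4*(U*S2 + 5*(W*S3))) * hU4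
      + (S3^2*(10*(U*S2)^3 + 10*(U*S2)^2*(W*S3) + 5*(U*S2)*(W*S3)^2 + (W*S3)^3)) * hW2
  have hβ5 : β^5 = 2 * (E:ℂ) := by
    have := congrArg (fun z : ↥S => (z : ℂ)) hB5
    push_cast at this
    exact this
  -- the module Wsub
  set Vsp : Submodule ℤ ℂ := Submodule.span ℤ (Set.range fun j : Fin 5 => β ^ (j:ℕ)) with hVsp
  set Dsp : Submodule ℤ ℂ := Submodule.span ℤ ((fun s : ℂ => 2*s) '' (S : Set ℂ)) with hDsp
  have hαpow : ∀ k : ℕ, α ^ k ∈ Vsp ⊔ Dsp := by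
    intro k
    have hαβ : α = β + (c:ℂ) := by rw [hβdef]; ring
    rw [hαβ, add_pow]
    refine Submodule.sum_mem _ ?_
    intro m hm
    rcases le_or_gt m 4 with h5 | h5
    · have heq : β^m * (c:ℂ)^(k-m) * (Nat.choose k m : ℂ)
          = ((c^(k-m) * (Nat.choose k m : ℤ)) : ℤ) • β^m := by
        rw [zsmul_eq_mul]; push_cast; ring
      rw [heq]
      refine Submodule.mem_sup_left (Submodule.smul_mem _ _ ?_)
      exact Submodule.subset_span ⟨⟨m, by omega⟩, rfl⟩
    · have hsplit : β^m = β^5 * β^(m-5) := by rw [← pow_add]; congr 1; omega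
      have heq : β^m * (c:ℂ)^(k-m) * (Nat.choose k m : ℂ)
          = 2 * ((E:ℂ) * β^(m-5) * (c:ℂ)^(k-m) * (Nat.choose k m : ℂ)) := by
        rw [hsplit, hβ5]; ring
      rw [heq]
      refine Submodule.mem_sup_right (Submodule.subset_span ⟨_, ?_, rfl⟩)
      exact mul_mem (mul_mem (mul_mem E.2 (pow_mem hβS _))
        (pow_mem (intCast_mem S c) _)) (natCast_mem S _)
  have hSW : ∀ x ∈ S, x ∈ Vsp ⊔ Dsp := by
    intro x hx
    have hx' : x ∈ Subring.closure {α} := by rw [hZα]; exact hx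
    have hx'' := closure_singleton_powers α hx'
    refine Submodule.span_le.mpr ?_ hx''
    rintro z ⟨n, rfl⟩
    exact hαpow n
  -- linear independence and basis
  have hb_li : LinearIndependent ℤ b := by
    rw [hb]
    have := indep_aux d hd t hirr ξ hξ
    rw [← hωdef] at this
    exact this
  let Mb : Module.Basis (Fin 4 × Fin 2) ℤ ↥M0 := Module.Basis.span hb_li
  let φ : ↥M0 → (Fin 4 × Fin 2 → ZMod 2) := fun x k => ((Mb.repr x) k : ZMod 2)
  have hφadd : ∀ x y : ↥M0, φ (x + y) = φ x + φ y := by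
    intro x y; funext k
    show ((Mb.repr (x+y)) k : ZMod 2) = ((Mb.repr x) k : ZMod 2) + ((Mb.repr y) k : ZMod 2)
    rw [map_add, Finsupp.add_apply]; push_cast; ring
  have hφsmul : ∀ (n : ℤ) (x : ↥M0), φ (n • x) = (n : ZMod 2) • φ x := by
    intro n x; funext k
    show ((Mb.repr (n • x)) k : ZMod 2) = (n : ZMod 2) • ((Mb.repr x) k : ZMod 2)
    rw [map_smul, Finsupp.smul_apply, smul_eq_mul, smul_eq_mul]
    push_cast; ring
  have hφsingle : ∀ k, φ ⟨b k, hbmem k⟩ = fun l => if k = l then 1 else 0 := by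
    intro k
    have h1 : (⟨b k, hbmem k⟩ : ↥M0) = Mb k := by
      apply Subtype.ext
      exact congrArg Subtype.val (Module.Basis.span_apply hb_li k).symm
    rw [h1]
    funext l
    show ((Mb.repr (Mb k)) l : ZMod 2) = if k = l then 1 else 0
    rw [Module.Basis.repr_self, Finsupp.single_apply]
    split <;> simp
  -- image of Vsp under φ
  have hVM0 : Vsp ≤ M0 := by
    rw [hVsp]
    refine Submodule.span_le.mpr ?_
    rintro z ⟨j, rfl⟩
    exact hSM0 _ (pow_mem hβS _)
  set G : Set (Fin 4 × Fin 2 → ZMod 2) :=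
    Set.range fun j : Fin 5 => φ ⟨β ^ (j:ℕ), hSM0 _ (pow_mem hβS _)⟩ with hG
  have hVim : ∀ z, ∀ hz : z ∈ Vsp, ∀ hzM : z ∈ M0,
      φ ⟨z, hzM⟩ ∈ Submodule.span (ZMod 2) G := by
    intro z hz
    induction hz using Submodule.span_induction with
    | mem y hy =>
      intro hzM
      obtain ⟨j, rfl⟩ := hy
      exact Submodule.subset_span ⟨j, rfl⟩
    | zero =>
      intro h
      have h0 : (⟨(0:ℂ), h⟩ : ↥M0) = 0 := rfl
      rw [h0]
      have : φ 0 = 0 := by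
        funext k
        show ((Mb.repr 0) k : ZMod 2) = 0
        rw [map_zero]; simp
      rw [this]; exact zero_mem _
    | add x y hx hy ihx ihy =>
      intro h
      have hxM : x ∈ M0 := hVM0 hx
      have hyM : y ∈ M0 := hVM0 hy
      have hsum : (⟨x + y, h⟩ : ↥M0) = ⟨x, hxM⟩ + ⟨y, hyM⟩ := rfl
      rw [hsum, hφadd]
      exact add_mem (ihx hxM) (ihy hyM)
    | smul n x hx ihx =>
      intro h
      have hxM : x ∈ M0 := hVM0 hx
      have hsm : (⟨n • x, h⟩ : ↥M0) = n • ⟨x, hxM⟩ := rfl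
      rw [hsm, hφsmul]
      exact Submodule.smul_mem _ _ (ihx hxM)
  -- standard basis vectors are in the span of G
  have hstd : ∀ k : Fin 4 × Fin 2, (fun l => if k = l then (1 : ZMod 2) else 0)
      ∈ Submodule.span (ZMod 2) G := by
    intro k
    have hbk : b k ∈ Vsp ⊔ Dsp := hSW _ (hM0S _ (hbmem k))
    rw [Submodule.mem_sup] at hbk
    obtain ⟨v, hv, z, hz, hvz⟩ := hbk
    obtain ⟨s, hsS, rfl⟩ : ∃ s, s ∈ S ∧ z = 2 * s := by
      clear hvz
      induction hz using Submodule.span_induction with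
      | mem y hy =>
        obtain ⟨s, hsS, rfl⟩ := hy
        exact ⟨s, hsS, rfl⟩
      | zero => exact ⟨0, zero_mem _, by ring⟩
      | add a b ha hb iha ihb =>
        obtain ⟨sa, hsa, rfl⟩ := iha
        obtain ⟨sb, hsb, rfl⟩ := ihb
        exact ⟨sa + sb, add_mem hsa hsb, by ring⟩
      | smul n a ha iha =>
        obtain ⟨sa, hsa, rfl⟩ := iha
        exact ⟨n • sa, zsmul_mem hsa n, by push_cast [zsmul_eq_mul]; ring⟩
    have hvM : v ∈ M0 := hVM0 hv
    have hsM : s ∈ M0 := hSM0 _ hsS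
    have hdec : (⟨b k, hbmem k⟩ : ↥M0) = ⟨v, hvM⟩ + (2:ℤ) • ⟨s, hsM⟩ := by
      apply Subtype.ext
      show b k = v + (2:ℤ) • s
      rw [zsmul_eq_mul]
      push_cast
      exact hvz.symm
    have h2 : φ ⟨b k, hbmem k⟩ = φ ⟨v, hvM⟩ := by
      rw [hdec, hφadd, hφsmul]
      have h20 : ((2:ℤ) : ZMod 2) = 0 := by decide
      rw [h20, zero_smul, add_zero]
    rw [← hφsingle k, h2]
    exact hVim v hv hvM
  -- contradiction by dimension count
  have htop : Submodule.span (ZMod 2) G = ⊤ := by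
    refine top_unique ?_
    intro x _
    rw [pi_eq_sum_univ x]
    refine Submodule.sum_mem _ ?_
    intro k _
    exact Submodule.smul_mem _ _ (hstd k)
  have hle5 : Module.finrank (ZMod 2) (Submodule.span (ZMod 2) G) ≤ 5 := by
    have := finrank_range_le_card (R := ZMod 2)
      (fun j : Fin 5 => φ ⟨β ^ (j:ℕ), hSM0 _ (pow_mem hβS _)⟩)
    simpa [Set.finrank, hG] using this
  rw [htop] at hle5
  rw [finrank_top] at hle5
  have h8 : Module.finrank (ZMod 2) (Fin 4 × Fin 2 → ZMod 2) = 8 := by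
    rw [Module.finrank_pi]
    simp
  rw [h8] at hle5
  omega
end
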